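/- arXiv:2007.11518 — 2 statements merged into one kernel-verified Lean document; each statement's English description precedes it below -/
import Mathlib

section
/- Let A be a 2×2 integer matrix with determinant 1 and trace > 2, and let ℰ ⊆ 𝕋² be a finite f_A-invariant set. Then there are finitely many orbits of primitive ℰ-rectangles under the group G: there exists a finite set F of rectangles such that every primitive positive ℰ-rectangle and every primitive negative ℰ-rectangle is the image g(R) of some rectangle R ∈ F under some element g ∈ G. -/
/- Common setup: following the paper, we identify each subset of the torus
`𝕋² = ℝ²/ℤ²` with its (`ℤ²`-saturated) lift to `ℝ²`. -/

open Matrix Set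
open scoped Pointwise

namespace Paper

/-- Points of the plane ℝ². -/
abbrev V : Type := Fin 2 → ℝ

/-- The integer lattice ℤ² ⊆ ℝ². -/
def lattice : Set V := Set.range fun m : Fin 2 → ℤ => fun i => (m i : ℝ)

/-- The linear action of an integer matrix on ℝ². -/
def actR (A : Matrix (Fin 2) (Fin 2) ℤ) (v : V) : V :=
  (A.map (Int.cast : ℤ → ℝ)).mulVec v

/-- `E ⊆ ℝ²` is the lift of a finite subset of the torus. -/
def IsTorusFinite (E : Set V) : Prop := ∃ F : Set V, F.Finite ∧ E = F + lattice

/-- `E` is the lift of an `f_A`-invariant subset of the torus. -/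
def IsInvariant (A : Matrix (Fin 2) (Fin 2) ℤ) (E : Set V) : Prop := actR A '' E = E

/-- `E` is the lift of a periodic orbit of `f_A`. -/
def IsPeriodicOrbit (A : Matrix (Fin 2) (Fin 2) ℤ) (E : Set V) : Prop :=
  ∃ x : V, ∃ p : ℕ, 0 < p ∧ (actR A)^[p] x - x ∈ lattice ∧
    E = {v | ∃ i : ℕ, v - (actR A)^[i] x ∈ lattice}

/-- A rectangle `R(p; s, u)`, recorded via its basepoint `p` and its side
lengths `s, u > 0` (in the directions of the fixed eigenvectors `v^s, v^u`). -/
structure Rect where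
  p : V
  s : ℝ
  u : ℝ
  s_pos : 0 < s
  u_pos : 0 < u

namespace Rect

/-- The set of points of the rectangle `R(p;s,u)`. -/
def carrier (vs vu : V) (R : Rect) : Set V :=
  {q | ∃ a b : ℝ, 0 ≤ a ∧ a ≤ R.s ∧ 0 ≤ b ∧ b ≤ R.u ∧ q = R.p + a • vs + b • vu}

/-- Endpoint of the increasing diagonal (whose origin is `R.p`). -/
def incEnd (vs vu : V) (R : Rect) : V := R.p + R.s • vs + R.u • vu

/-- Origin of the decreasing diagonal. -/
def decOrigin (vs : V) (R : Rect) : V := R.p + R.s • vs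

/-- Endpoint of the decreasing diagonal. -/
def decEnd (vu : V) (R : Rect) : V := R.p + R.u • vu

/-- `R` is a positive `E`-rectangle. -/
def IsPos (vs vu : V) (E : Set V) (R : Rect) : Prop :=
  R.p ∈ E ∧ R.incEnd vs vu ∈ E

/-- `R` is a negative `E`-rectangle. -/
def IsNeg (vs vu : V) (E : Set V) (R : Rect) : Prop :=
  R.decOrigin vs ∈ E ∧ R.decEnd vu ∈ E

/-- `R` is a primitive positive `E`-rectangle. -/
def IsPrimPos (vs vu : V) (E : Set V) (R : Rect) : Prop :=
  R.IsPos vs vu E ∧ R.carrier vs vu ∩ E = {R.p, R.incEnd vs vu}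

/-- `R` is a primitive negative `E`-rectangle. -/
def IsPrimNeg (vs vu : V) (E : Set V) (R : Rect) : Prop :=
  R.IsNeg vs vu E ∧ R.carrier vs vu ∩ E = {R.decOrigin vs, R.decEnd vu}

/-- Bottom stable side of a rectangle. -/
def botSide (vs : V) (R : Rect) : Set V :=
  {q | ∃ a : ℝ, 0 ≤ a ∧ a ≤ R.s ∧ q = R.p + a • vs}

/-- Top stable side of a rectangle. -/
def topSide (vs vu : V) (R : Rect) : Set V :=
  {q | ∃ a : ℝ, 0 ≤ a ∧ a ≤ R.s ∧ q = R.p + a • vs + R.u • vu}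

/-- Left unstable side of a rectangle. -/
def leftSide (vu : V) (R : Rect) : Set V :=
  {q | ∃ b : ℝ, 0 ≤ b ∧ b ≤ R.u ∧ q = R.p + b • vu}

/-- Interior of a rectangle. -/
def interior (vs vu : V) (R : Rect) : Set V :=
  {q | ∃ a b : ℝ, 0 < a ∧ a < R.s ∧ 0 < b ∧ b < R.u ∧ q = R.p + a • vs + b • vu}

end Rect

/-- The (closed) quadrant `C₊₊(x)`. -/
def quadPP (vs vu x : V) : Set V :=
  {q | ∃ a b : ℝ, 0 ≤ a ∧ 0 ≤ b ∧ q = x + a • vs + b • vu}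

/-- `D` is a right horizontal subrectangle of `R`. -/
def IsRightHorizSub (vs : V) (D R : Rect) : Prop :=
  D.s ≤ R.s ∧ D.u = R.u ∧ D.p = R.p + (R.s - D.s) • vs

/-- A positive `X`-string with origin `x`: a sequence of positive `X`-rectangles,
the first one having `x` as origin of its increasing diagonal, consecutive ones
meeting exactly at one point which is the endpoint of the increasing diagonal of
the former and the origin of the increasing diagonal of the latter. -/
def IsPosString (vs vu : V) (X : Set V) (x : V) (R : ℕ → Rect) : Prop :=
  (∀ i, (R i).IsPos vs vu X) ∧ (R 0).p = x ∧
    ∀ i, (R i).carrier vs vu ∩ (R (i + 1)).carrier vs vu = {(R i).incEnd vs vu} ∧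
      (R (i + 1)).p = (R i).incEnd vs vu

/-- A positive `X`-staircase with origin `x`. -/
def IsPosStaircase (vs vu : V) (X : Set V) (x : V) (R : ℕ → Rect) : Prop :=
  (∀ i, (R i).carrier vs vu ⊆ quadPP vs vu x) ∧
    ∃ Del : ℕ → Rect, IsPosString vs vu X x Del ∧ R 0 = Del 0 ∧
      (∀ i, 1 ≤ i → IsRightHorizSub vs (Del i) (R i)) ∧
      (∀ i, (R i).topSide vs vu ⊆ (R (i + 1)).botSide vs) ∧
      ∃ C : ℝ, ∀ i, (Del (i + 1)).s / (Del i).s ≤ C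

/-- Stable side lengths of the primitive positive `(X, x)`-rectangles. -/
def baseLengths (vs vu : V) (X : Set V) (x : V) : Set ℝ :=
  {s | ∃ R : Rect, R.IsPrimPos vs vu X ∧ R.p = x ∧ R.s = s}

/-- The Euclidean norm of a point of ℝ². -/
noncomputable def euclNorm (v : V) : ℝ := Real.sqrt ((v 0) ^ 2 + (v 1) ^ 2)

/-- `Y` is the lift of an `ε`-dense subset of the torus, for the metric on the
torus induced by the Euclidean metric of ℝ². -/
def EDense (ε : ℝ) (Y : Set V) : Prop := ∀ v : V, ∃ y ∈ Y, euclNorm (v - y) ≤ ε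

/-- The lift of `{(0,1/2), (1/2,0), (1/2,1/2)}`, i.e. the set
`{(0,1/2), (1/2,0), (1/2,1/2)} + ℤ²`. -/
def halfPoints : Set V :=
  {v : V | ∃ w ∈ ({![0, 1/2], ![1/2, 0], ![1/2, 1/2]} : Set V), v - w ∈ lattice}

/-- The lift of the point `(1/2,1/2)` of the torus, i.e. `(1/2,1/2) + ℤ²`. -/
def halfCenter : Set V := {v : V | v - ![1/2, 1/2] ∈ lattice}

/-- `A^k` acting linearly on ℝ², for `k : ℤ` (the real matrix is invertible
since `det A = 1`). -/
noncomputable def actRZ (A : Matrix (Fin 2) (Fin 2) ℤ) (k : ℤ) (v : V) : V :=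
  ((A.map (Int.cast : ℤ → ℝ)) ^ k).mulVec v

/-- Membership in the group `G` of affine transformations of ℝ² generated by
the linear map induced by `A` and the translations by vectors of `ℤ²`: these
are exactly the maps `v ↦ A^k v + z` with `k : ℤ` and `z ∈ ℤ²`. -/
def GElem (A : Matrix (Fin 2) (Fin 2) ℤ) (g : V → V) : Prop :=
  ∃ k : ℤ, ∃ z ∈ lattice, ∀ v : V, g v = actRZ A k v + z

/-! ### Auxiliary machinery -/

section Aux

variable {A : Matrix (Fin 2) (Fin 2) ℤ} {lam : ℝ} {vs vu : V} {E F₀ : Set V}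

/-- The real matrix induced by an integer matrix. -/
def Mr (A : Matrix (Fin 2) (Fin 2) ℤ) : Matrix (Fin 2) (Fin 2) ℝ :=
  A.map (Int.cast : ℤ → ℝ)

lemma Mr_det (hdet : A.det = 1) : (Mr A).det = 1 := by
  have h := RingHom.map_det (Int.castRingHom ℝ) A
  rw [RingHom.mapMatrix_apply] at h
  have h2 : Mr A = A.map (Int.castRingHom ℝ) := rfl
  rw [h2, ← h, hdet]
  simp

lemma Mr_isUnit_det (hdet : A.det = 1) : IsUnit (Mr A).det := by
  rw [Mr_det hdet]; exact isUnit_one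

lemma actRZ_eq (k : ℤ) (v : V) : actRZ A k v = (Mr A ^ k).mulVec v := rfl

lemma actR_eq (v : V) : actR A v = (Mr A).mulVec v := rfl

lemma actRZ_add (k : ℤ) (x y : V) :
    actRZ A k (x + y) = actRZ A k x + actRZ A k y :=
  Matrix.mulVec_add _ _ _

lemma actRZ_smul (k : ℤ) (c : ℝ) (x : V) :
    actRZ A k (c • x) = c • actRZ A k x :=
  Matrix.mulVec_smul _ _ _

lemma actRZ_zero_app (k : ℤ) : actRZ A k (0 : V) = 0 :=
  Matrix.mulVec_zero _

lemma actRZ_neg (k : ℤ) (x : V) : actRZ A k (-x) = -actRZ A k x :=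
  Matrix.mulVec_neg _ _

lemma actRZ_zero (v : V) : actRZ A 0 v = v := by
  rw [actRZ_eq, zpow_zero, Matrix.one_mulVec]

lemma actRZ_comp (hdet : A.det = 1) (j k : ℤ) (v : V) :
    actRZ A j (actRZ A k v) = actRZ A (j + k) v := by
  rw [actRZ_eq, actRZ_eq, actRZ_eq, Matrix.mulVec_mulVec,
    ← Matrix.zpow_add (Mr_isUnit_det hdet)]

lemma actRZ_succ (hdet : A.det = 1) (k : ℤ) (v : V) :
    actRZ A (k + 1) v = actRZ A k (actR A v) := by
  rw [actRZ_eq, actRZ_eq, actR_eq, Matrix.zpow_add_one (Mr_isUnit_det hdet),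
    Matrix.mulVec_mulVec]

lemma actRZ_pred (hdet : A.det = 1) (k : ℤ) (v : V) :
    actRZ A (k - 1) v = actRZ A k ((Mr A)⁻¹.mulVec v) := by
  rw [actRZ_eq, actRZ_eq, Matrix.zpow_sub_one (Mr_isUnit_det hdet),
    Matrix.mulVec_mulVec]

lemma exists_int_pow (hdet : A.det = 1) (k : ℤ) :
    ∃ B : Matrix (Fin 2) (Fin 2) ℤ, Mr A ^ k = Mr B := by
  have hA : IsUnit A := A.isUnit_iff_isUnit_det.mpr (by rw [hdet]; exact isUnit_one)
  set f : Matrix (Fin 2) (Fin 2) ℤ →+* Matrix (Fin 2) (Fin 2) ℝ :=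
    (Int.castRingHom ℝ).mapMatrix with hf
  have hMr : ∀ B : Matrix (Fin 2) (Fin 2) ℤ, Mr B = f B := fun B => rfl
  obtain ⟨u, rfl⟩ := hA
  refine ⟨((u ^ k : (Matrix (Fin 2) (Fin 2) ℤ)ˣ) : Matrix (Fin 2) (Fin 2) ℤ), ?_⟩
  rw [hMr, hMr]
  calc f (u : Matrix (Fin 2) (Fin 2) ℤ) ^ k
      = (((Units.map f.toMonoidHom u) : (Matrix (Fin 2) (Fin 2) ℝ)ˣ) : Matrix (Fin 2) (Fin 2) ℝ) ^ k := rfl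
    _ = (((Units.map f.toMonoidHom u) ^ k : (Matrix (Fin 2) (Fin 2) ℝ)ˣ) : Matrix (Fin 2) (Fin 2) ℝ) :=
        (Matrix.coe_units_zpow _ k).symm
    _ = (((Units.map f.toMonoidHom (u ^ k)) : (Matrix (Fin 2) (Fin 2) ℝ)ˣ) : Matrix (Fin 2) (Fin 2) ℝ) := by
        rw [map_zpow]
    _ = f ((u ^ k : (Matrix (Fin 2) (Fin 2) ℤ)ˣ) : Matrix (Fin 2) (Fin 2) ℤ) := rfl

lemma lattice_zero : (0 : V) ∈ lattice :=
  ⟨0, by funext i; simp⟩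

lemma lattice_add {x y : V} (hx : x ∈ lattice) (hy : y ∈ lattice) :
    x + y ∈ lattice := by
  obtain ⟨m, rfl⟩ := hx
  obtain ⟨n, rfl⟩ := hy
  exact ⟨m + n, by funext i; simp⟩

lemma lattice_neg {x : V} (hx : x ∈ lattice) : -x ∈ lattice := by
  obtain ⟨m, rfl⟩ := hx
  exact ⟨-m, by funext i; simp⟩

lemma actRZ_lattice (hdet : A.det = 1) (k : ℤ) {x : V} (hx : x ∈ lattice) :
    actRZ A k x ∈ lattice := by
  obtain ⟨B, hB⟩ := exists_int_pow hdet k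
  obtain ⟨m, rfl⟩ := hx
  rw [actRZ_eq, hB]
  refine ⟨B.mulVec m, ?_⟩
  funext i
  simp [Mr, Matrix.mulVec, dotProduct, Matrix.map_apply, Fin.sum_univ_two]

lemma inv_mulVec_eig (hdet : A.det = 1) {lamv : ℝ} (hlv : lamv ≠ 0) {v : V}
    (hv : actR A v = lamv • v) : (Mr A)⁻¹.mulVec v = lamv⁻¹ • v := by
  have h1 : (Mr A)⁻¹.mulVec ((Mr A).mulVec v) = v := by
    rw [Matrix.mulVec_mulVec, Matrix.nonsing_inv_mul _ (Mr_isUnit_det hdet),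
      Matrix.one_mulVec]
  rw [actR_eq] at hv
  rw [hv, Matrix.mulVec_smul] at h1
  calc (Mr A)⁻¹.mulVec v = lamv⁻¹ • (lamv • (Mr A)⁻¹.mulVec v) := by
        rw [smul_smul, inv_mul_cancel₀ hlv, one_smul]
    _ = lamv⁻¹ • v := by rw [h1]

lemma actRZ_eig (hdet : A.det = 1) {lamv : ℝ} (hlv : lamv ≠ 0) {v : V}
    (hv : actR A v = lamv • v) (k : ℤ) : actRZ A k v = lamv ^ k • v := by
  induction k using Int.induction_on with
  | zero => rw [actRZ_zero, zpow_zero, one_smul]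
  | succ n ih =>
      rw [actRZ_succ hdet, hv, actRZ_smul, ih, smul_smul]
      congr 1
      rw [zpow_add_one₀ hlv]; ring
  | pred n ih =>
      rw [show (-(n:ℤ) - 1) = (-(n:ℤ)) - 1 by ring, actRZ_pred hdet,
        inv_mulVec_eig hdet hlv hv, actRZ_smul, ih, smul_smul]
      congr 1
      rw [zpow_sub_one₀ hlv]; ring

lemma actRZ_vs (hdet : A.det = 1) (hlamne : lam ≠ 0)
    (hAs : actR A vs = lam⁻¹ • vs) (k : ℤ) :
    actRZ A k vs = lam ^ (-k) • vs := by
  rw [actRZ_eig hdet (inv_ne_zero hlamne) hAs k]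
  congr 1
  rw [_root_.inv_zpow, ← _root_.zpow_neg]

lemma actRZ_vu (hdet : A.det = 1) (hlamne : lam ≠ 0)
    (hAu : actR A vu = lam • vu) (k : ℤ) :
    actRZ A k vu = lam ^ k • vu :=
  actRZ_eig hdet hlamne hAu k

lemma actRZ_image_E (hdet : A.det = 1) (hEinv : IsInvariant A E) (k : ℤ) :
    actRZ A k '' E = E := by
  have hMinv : ∀ v : V, (Mr A)⁻¹.mulVec ((Mr A).mulVec v) = v := by
    intro v
    rw [Matrix.mulVec_mulVec, Matrix.nonsing_inv_mul _ (Mr_isUnit_det hdet),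
      Matrix.one_mulVec]
  have hinv_img : (fun v => (Mr A)⁻¹.mulVec v) '' E = E := by
    conv_lhs => rw [← hEinv]
    rw [← Set.image_comp]
    have h : ((fun v => (Mr A)⁻¹.mulVec v) ∘ actR A) = id := funext fun v => hMinv v
    rw [h, Set.image_id]
  induction k using Int.induction_on with
  | zero =>
      have h : actRZ A 0 = (id : V → V) := funext fun v => actRZ_zero v
      rw [h, Set.image_id]
  | succ n ih =>
      have h : actRZ A ((n : ℤ) + 1) = (actRZ A n) ∘ (actR A) :=
        funext fun v => actRZ_succ hdet n v
      rw [h, Set.image_comp, hEinv, ih]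
  | pred n ih =>
      have h : actRZ A (-(n : ℤ) - 1) = (actRZ A (-(n:ℤ))) ∘ (fun v => (Mr A)⁻¹.mulVec v) :=
        funext fun v => actRZ_pred hdet (-(n:ℤ)) v
      rw [h, Set.image_comp, hinv_img, ih]

lemma E_add_lattice (hEeq : E = F₀ + lattice) {e z : V} (he : e ∈ E)
    (hz : z ∈ lattice) : e + z ∈ E := by
  rw [hEeq] at he ⊢
  obtain ⟨f, hf, m, hm, hsum⟩ := Set.mem_add.mp he
  exact Set.mem_add.mpr ⟨f, hf, m + z, lattice_add hm hz, by rw [← hsum, add_assoc]⟩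

lemma translate_image_E (hEeq : E = F₀ + lattice) {z : V} (hz : z ∈ lattice) :
    (fun v => v + z) '' E = E := by
  ext e
  constructor
  · rintro ⟨w, hw, rfl⟩
    exact E_add_lattice hEeq hw hz
  · intro he
    exact ⟨e + -z, E_add_lattice hEeq he (lattice_neg hz), by
      simp [add_assoc]⟩

lemma h_image_E (hdet : A.det = 1) (hEinv : IsInvariant A E)
    (hEeq : E = F₀ + lattice) (k : ℤ) {z : V} (hz : z ∈ lattice) :
    (fun v => actRZ A k v + z) '' E = E := by
  have h : (fun v : V => actRZ A k v + z) = (fun v => v + z) ∘ (actRZ A k) := rfl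
  rw [h, Set.image_comp, actRZ_image_E hdet hEinv, translate_image_E hEeq hz]

lemma ginv_leftinv (hdet : A.det = 1) (k : ℤ) (z v : V) :
    actRZ A (-k) (actRZ A k v + z) + actRZ A (-k) (-z) = v := by
  rw [actRZ_add, actRZ_neg, add_assoc, add_neg_cancel, add_zero,
    actRZ_comp hdet, show -k + k = 0 by ring, actRZ_zero]

lemma h_inj (hdet : A.det = 1) (k : ℤ) (z : V) :
    Function.Injective (fun v : V => actRZ A k v + z) := by
  intro x y hxy
  have hx := ginv_leftinv (A := A) hdet k z x
  have hy := ginv_leftinv (A := A) hdet k z y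
  simp only at hxy
  rw [← hx, ← hy, hxy]

/-- The image of a rectangle under `v ↦ A^k v + z`. -/
noncomputable def transport (A : Matrix (Fin 2) (Fin 2) ℤ) {lam : ℝ} (hlam0 : 0 < lam)
    (k : ℤ) (z : V) (R : Rect) : Rect where
  p := actRZ A k R.p + z
  s := lam ^ (-k) * R.s
  u := lam ^ k * R.u
  s_pos := mul_pos (zpow_pos hlam0 _) R.s_pos
  u_pos := mul_pos (zpow_pos hlam0 _) R.u_pos

lemma h_apply_pt (hdet : A.det = 1) (hlamne : lam ≠ 0)
    (hAs : actR A vs = lam⁻¹ • vs) (hAu : actR A vu = lam • vu)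
    (k : ℤ) (z p : V) (a b : ℝ) :
    actRZ A k (p + a • vs + b • vu) + z
      = (actRZ A k p + z) + (lam ^ (-k) * a) • vs + (lam ^ k * b) • vu := by
  rw [actRZ_add, actRZ_add, actRZ_smul, actRZ_smul, actRZ_vs hdet hlamne hAs,
    actRZ_vu hdet hlamne hAu, smul_smul, smul_smul]
  module

lemma transport_carrier (hdet : A.det = 1) (hlam0 : 0 < lam)
    (hAs : actR A vs = lam⁻¹ • vs) (hAu : actR A vu = lam • vu)
    (k : ℤ) (z : V) (R : Rect) :
    (transport A hlam0 k z R).carrier vs vu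
      = (fun v => actRZ A k v + z) '' R.carrier vs vu := by
  have hlamne : lam ≠ 0 := ne_of_gt hlam0
  have hzk : (0:ℝ) < lam ^ k := zpow_pos hlam0 _
  have hznk : (0:ℝ) < lam ^ (-k) := zpow_pos hlam0 _
  have hcan : ∀ x : ℝ, lam ^ (-k) * (lam ^ k * x) = x := by
    intro x; rw [← mul_assoc, ← zpow_add₀ hlamne]; simp
  have hcan' : ∀ x : ℝ, lam ^ k * (lam ^ (-k) * x) = x := by
    intro x; rw [← mul_assoc, ← zpow_add₀ hlamne]; simp
  ext q
  constructor
  · rintro ⟨a, b, ha0, has, hb0, hbu, rfl⟩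
    refine ⟨R.p + (lam ^ k * a) • vs + (lam ^ (-k) * b) • vu,
      ⟨lam ^ k * a, lam ^ (-k) * b, mul_nonneg hzk.le ha0, ?_,
        mul_nonneg hznk.le hb0, ?_, rfl⟩, ?_⟩
    · calc lam ^ k * a ≤ lam ^ k * (lam ^ (-k) * R.s) :=
            mul_le_mul_of_nonneg_left has hzk.le
        _ = R.s := hcan' _
    · calc lam ^ (-k) * b ≤ lam ^ (-k) * (lam ^ k * R.u) :=
            mul_le_mul_of_nonneg_left hbu hznk.le
        _ = R.u := hcan _
    · show actRZ A k (R.p + (lam ^ k * a) • vs + (lam ^ (-k) * b) • vu) + z = _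
      rw [h_apply_pt hdet hlamne hAs hAu, hcan, hcan']
      rfl
  · rintro ⟨w, ⟨a, b, ha0, has, hb0, hbu, rfl⟩, rfl⟩
    refine ⟨lam ^ (-k) * a, lam ^ k * b, mul_nonneg hznk.le ha0,
      mul_le_mul_of_nonneg_left has hznk.le,
      mul_nonneg hzk.le hb0,
      mul_le_mul_of_nonneg_left hbu hzk.le,
      by show actRZ A k (R.p + a • vs + b • vu) + z = _
         rw [h_apply_pt hdet hlamne hAs hAu]
         rfl⟩

lemma transport_p (hlam0 : 0 < lam) (k : ℤ) (z : V) (R : Rect) :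
    (transport A hlam0 k z R).p = actRZ A k R.p + z := rfl

lemma transport_incEnd (hdet : A.det = 1) (hlam0 : 0 < lam)
    (hAs : actR A vs = lam⁻¹ • vs) (hAu : actR A vu = lam • vu)
    (k : ℤ) (z : V) (R : Rect) :
    (transport A hlam0 k z R).incEnd vs vu = actRZ A k (R.incEnd vs vu) + z := by
  have hlamne : lam ≠ 0 := ne_of_gt hlam0
  simp only [Rect.incEnd, transport]
  rw [h_apply_pt hdet hlamne hAs hAu]

lemma transport_decOrigin (hdet : A.det = 1) (hlam0 : 0 < lam)
    (hAs : actR A vs = lam⁻¹ • vs) (k : ℤ) (z : V) (R : Rect) :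
    (transport A hlam0 k z R).decOrigin vs = actRZ A k (R.decOrigin vs) + z := by
  have hlamne : lam ≠ 0 := ne_of_gt hlam0
  simp only [Rect.decOrigin, transport]
  rw [actRZ_add, actRZ_smul, actRZ_vs hdet hlamne hAs, smul_smul]
  module

lemma transport_decEnd (hdet : A.det = 1) (hlam0 : 0 < lam)
    (hAu : actR A vu = lam • vu) (k : ℤ) (z : V) (R : Rect) :
    (transport A hlam0 k z R).decEnd vu = actRZ A k (R.decEnd vu) + z := by
  have hlamne : lam ≠ 0 := ne_of_gt hlam0
  simp only [Rect.decEnd, transport]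
  rw [actRZ_add, actRZ_smul, actRZ_vu hdet hlamne hAu, smul_smul]
  module

lemma transport_prim_pos (hdet : A.det = 1) (hlam0 : 0 < lam)
    (hAs : actR A vs = lam⁻¹ • vs) (hAu : actR A vu = lam • vu)
    (hEinv : IsInvariant A E) (hEeq : E = F₀ + lattice)
    (k : ℤ) {z : V} (hz : z ∈ lattice) {R : Rect}
    (hR : R.IsPrimPos vs vu E) :
    (transport A hlam0 k z R).IsPrimPos vs vu E := by
  obtain ⟨⟨hp, hq⟩, hcap⟩ := hR
  have himg : ∀ w ∈ E, actRZ A k w + z ∈ E := by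
    intro w hw
    rw [← h_image_E hdet hEinv hEeq k hz]
    exact ⟨w, hw, rfl⟩
  constructor
  · exact ⟨by rw [transport_p]; exact himg _ hp,
      by rw [transport_incEnd hdet hlam0 hAs hAu]; exact himg _ hq⟩
  · rw [transport_carrier hdet hlam0 hAs hAu]
    conv_lhs => rw [← h_image_E hdet hEinv hEeq k hz]
    rw [← Set.image_inter (h_inj hdet k z), hcap, Set.image_pair,
      transport_p, transport_incEnd hdet hlam0 hAs hAu]

lemma transport_prim_neg (hdet : A.det = 1) (hlam0 : 0 < lam)
    (hAs : actR A vs = lam⁻¹ • vs) (hAu : actR A vu = lam • vu)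
    (hEinv : IsInvariant A E) (hEeq : E = F₀ + lattice)
    (k : ℤ) {z : V} (hz : z ∈ lattice) {R : Rect}
    (hR : R.IsPrimNeg vs vu E) :
    (transport A hlam0 k z R).IsPrimNeg vs vu E := by
  obtain ⟨⟨hp, hq⟩, hcap⟩ := hR
  have himg : ∀ w ∈ E, actRZ A k w + z ∈ E := by
    intro w hw
    rw [← h_image_E hdet hEinv hEeq k hz]
    exact ⟨w, hw, rfl⟩
  constructor
  · exact ⟨by rw [transport_decOrigin hdet hlam0 hAs]; exact himg _ hp,
      by rw [transport_decEnd hdet hlam0 hAu]; exact himg _ hq⟩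
  · rw [transport_carrier hdet hlam0 hAs hAu]
    conv_lhs => rw [← h_image_E hdet hEinv hEeq k hz]
    rw [← Set.image_inter (h_inj hdet k z), hcap, Set.image_pair,
      transport_decOrigin hdet hlam0 hAs, transport_decEnd hdet hlam0 hAu]

end Aux

section Geom

variable {A : Matrix (Fin 2) (Fin 2) ℤ} {lam : ℝ} {vs vu : V} {E F₀ : Set V}
variable {φv ψv : V →ₗ[ℝ] ℝ}

lemma ginv_image (hdet : A.det = 1) (k : ℤ) (z : V) (S : Set V) :
    (fun v => actRZ A (-k) v + actRZ A (-k) (-z)) ''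
      ((fun v => actRZ A k v + z) '' S) = S := by
  ext w
  constructor
  · rintro ⟨x, ⟨y, hy, rfl⟩, rfl⟩
    simp only
    rw [ginv_leftinv hdet k z y]
    exact hy
  · intro hw
    exact ⟨actRZ A k w + z, ⟨w, hw, rfl⟩, ginv_leftinv hdet k z w⟩

lemma prim_bound
    (hrepr : ∀ v : V, v = φv v • vs + ψv v • vu)
    (hφs : φv vs = 1) (hφu : φv vu = 0) (hψs : ψv vs = 0) (hψu : ψv vu = 1)
    {C : ℝ} (hC : 0 ≤ C)
    (hCb : ∀ w : V, (∀ i, |w i| ≤ (2:ℝ)⁻¹) → |φv w| ≤ C ∧ |ψv w| ≤ C)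
    (hEl : ∀ e ∈ E, ∀ m ∈ lattice, e + m ∈ E)
    {q : V} (hq : q ∈ E)
    {R : Rect} (hR : R.IsPrimPos vs vu E ∨ R.IsPrimNeg vs vu E)
    (hs : 2 * C + 1 ≤ R.s) (hu : 2 * C + 1 ≤ R.u) : False := by
  set c : V := R.p + (R.s / 2) • vs + (R.u / 2) • vu with hc
  set m : V := (fun i => ((round (c i - q i) : ℤ) : ℝ)) with hmdef
  have hm : m ∈ lattice := ⟨fun i => round (c i - q i), rfl⟩
  have he : q + m ∈ E := hEl q hq m hm
  set e : V := q + m with hedef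
  have hsmall : ∀ i, |(e - c) i| ≤ (2:ℝ)⁻¹ := by
    intro i
    have h1 : (e - c) i = -((c i - q i) - ((round (c i - q i) : ℤ) : ℝ)) := by
      simp [hedef, hmdef]
      ring
    rw [h1, abs_neg]
    have h2 := abs_sub_round (c i - q i)
    rw [show ((2:ℝ))⁻¹ = 1 / 2 by norm_num]
    exact h2
  obtain ⟨hφsm, hψsm⟩ := hCb _ hsmall
  have hcd : c - R.p = (R.s / 2) • vs + (R.u / 2) • vu := by rw [hc]; abel
  obtain ⟨a, b, hab⟩ : ∃ a b : ℝ, e - R.p = a • vs + b • vu := ⟨_, _, hrepr _⟩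
  have hec : e - c = (a - R.s / 2) • vs + (b - R.u / 2) • vu := by
    have h3 : e - c = (e - R.p) - (c - R.p) := by abel
    rw [h3, hab, hcd]
    module
  have hφe : φv (e - c) = a - R.s / 2 := by
    rw [hec, map_add, _root_.map_smul, _root_.map_smul, hφs, hφu]
    simp
  have hψe : ψv (e - c) = b - R.u / 2 := by
    rw [hec, map_add, _root_.map_smul, _root_.map_smul, hψs, hψu]
    simp
  rw [hφe] at hφsm
  rw [hψe] at hψsm
  obtain ⟨ha1, ha2⟩ := abs_le.mp hφsm
  obtain ⟨hb1, hb2⟩ := abs_le.mp hψsm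
  have ha0 : 0 < a := by linarith
  have haS : a < R.s := by linarith
  have hb0 : 0 < b := by linarith
  have hbU : b < R.u := by linarith
  have hmem : e ∈ R.carrier vs vu := by
    refine ⟨a, b, ha0.le, haS.le, hb0.le, hbU.le, ?_⟩
    have h := hab
    rw [sub_eq_iff_eq_add] at h
    rw [h]; abel
  rcases hR with ⟨_, hcap⟩ | ⟨_, hcap⟩
  · have hein : e ∈ ({R.p, R.incEnd vs vu} : Set V) := by
      rw [← hcap]; exact ⟨hmem, he⟩
    rcases hein with heq | heq
    · have h0 : (0 : V) = a • vs + b • vu := by rw [← hab, heq, sub_self]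
      have hφ0 := congrArg φv h0
      rw [map_zero, map_add, _root_.map_smul, _root_.map_smul, hφs, hφu] at hφ0
      simp at hφ0
      linarith
    · have h0 : R.s • vs + R.u • vu = a • vs + b • vu := by
        rw [← hab, heq, Rect.incEnd]; abel
      have hφ0 := congrArg φv h0
      rw [map_add, map_add, _root_.map_smul, _root_.map_smul, _root_.map_smul, _root_.map_smul,
        hφs, hφu] at hφ0
      simp at hφ0
      linarith
  · have hein : e ∈ ({R.decOrigin vs, R.decEnd vu} : Set V) := by
      rw [← hcap]; exact ⟨hmem, he⟩
    rcases hein with heq | heq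
    · have h0 : R.s • vs = a • vs + b • vu := by
        rw [← hab, heq, Rect.decOrigin]; abel
      have hψ0 := congrArg ψv h0
      rw [map_add, _root_.map_smul, _root_.map_smul, _root_.map_smul, hψs, hψu] at hψ0
      simp at hψ0
      linarith
    · have h0 : R.u • vu = a • vs + b • vu := by
        rw [← hab, heq, Rect.decEnd]; abel
      have hφ0 := congrArg φv h0
      rw [map_add, _root_.map_smul, _root_.map_smul, _root_.map_smul, hφs, hφu] at hφ0
      simp at hφ0
      linarith

lemma u_bound (hdet : A.det = 1) (hlam : 1 < lam)
    (hAs : actR A vs = lam⁻¹ • vs) (hAu : actR A vu = lam • vu)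
    (hEinv : IsInvariant A E) (hEeq : E = F₀ + lattice)
    (hrepr : ∀ v : V, v = φv v • vs + ψv v • vu)
    (hφs : φv vs = 1) (hφu : φv vu = 0) (hψs : ψv vs = 0) (hψu : ψv vu = 1)
    {C : ℝ} (hC : 0 ≤ C)
    (hCb : ∀ w : V, (∀ i, |w i| ≤ (2:ℝ)⁻¹) → |φv w| ≤ C ∧ |ψv w| ≤ C)
    {q : V} (hq : q ∈ E)
    {R : Rect} (hR : R.IsPrimPos vs vu E ∨ R.IsPrimNeg vs vu E)
    (hs1 : 1 ≤ R.s) : R.u ≤ lam * (2 * C + 1) ^ 2 := by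
  have hlam0 : (0:ℝ) < lam := lt_trans one_pos hlam
  by_contra hcon
  push_neg at hcon
  have hEl : ∀ e ∈ E, ∀ m ∈ lattice, e + m ∈ E :=
    fun e he m hm => E_add_lattice hEeq he hm
  have hM1 : (1:ℝ) ≤ 2 * C + 1 := by linarith
  have hex : ∃ n : ℕ, 2 * C + 1 ≤ lam ^ n :=
    (pow_unbounded_of_one_lt (2 * C + 1) hlam).imp fun n h => h.le
  have hj : 2 * C + 1 ≤ lam ^ (Nat.find hex) := Nat.find_spec hex
  set j := Nat.find hex with hjdef
  have hjle : lam ^ j ≤ lam * (2 * C + 1) := by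
    rcases Nat.eq_zero_or_pos j with h0 | hpos
    · rw [h0, pow_zero]; nlinarith
    · obtain ⟨i, hi⟩ : ∃ i, j = i + 1 := ⟨j - 1, (Nat.succ_pred_eq_of_pos hpos).symm⟩
      have hlt : ¬ (2 * C + 1 ≤ lam ^ i) :=
        Nat.find_min hex (by rw [← hjdef]; omega)
      push_neg at hlt
      rw [hi, pow_succ]
      nlinarith
  set R' := transport A hlam0 (-(j:ℤ)) 0 R with hR'def
  have hR' : R'.IsPrimPos vs vu E ∨ R'.IsPrimNeg vs vu E := by
    rcases hR with h | h
    · exact Or.inl (transport_prim_pos hdet hlam0 hAs hAu hEinv hEeq _ lattice_zero h)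
    · exact Or.inr (transport_prim_neg hdet hlam0 hAs hAu hEinv hEeq _ lattice_zero h)
  have hpj : (0:ℝ) < lam ^ j := pow_pos hlam0 j
  refine prim_bound hrepr hφs hφu hψs hψu hC hCb hEl hq hR' ?_ ?_
  · have h1 : R'.s = lam ^ j * R.s := by
      rw [hR'def]
      show lam ^ (-(-(j:ℤ))) * R.s = lam ^ j * R.s
      rw [neg_neg, zpow_natCast]
    rw [h1]
    nlinarith
  · have h1 : R'.u = (lam ^ j)⁻¹ * R.u := by
      rw [hR'def]
      show lam ^ (-(j:ℤ)) * R.u = (lam ^ j)⁻¹ * R.u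
      rw [_root_.zpow_neg, zpow_natCast]
    rw [h1, inv_mul_eq_div, le_div_iff₀ hpj]
    calc (2 * C + 1) * lam ^ j ≤ (2 * C + 1) * (lam * (2 * C + 1)) := by nlinarith
      _ = lam * (2 * C + 1) ^ 2 := by ring
      _ ≤ R.u := hcon.le

lemma lattice_box_finite (r : ℝ) :
    {v : V | v ∈ lattice ∧ ∀ i, |v i| ≤ r}.Finite := by
  have hsub : {v : V | v ∈ lattice ∧ ∀ i, |v i| ≤ r} ⊆
      (fun m : Fin 2 → ℤ => fun i => (m i : ℝ)) ''
        {m : Fin 2 → ℤ | ∀ i, m i ∈ Set.Icc (-⌈r⌉) ⌈r⌉} := by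
    rintro v ⟨hlat, hb⟩
    obtain ⟨m, rfl⟩ := hlat
    refine ⟨m, fun i => ?_, rfl⟩
    have h1 : |(m i : ℝ)| ≤ r := hb i
    rw [abs_le] at h1
    constructor
    · have h2 : ((-⌈r⌉ : ℤ) : ℝ) ≤ (m i : ℝ) := by
        push_cast
        linarith [Int.le_ceil r]
      exact_mod_cast h2
    · have h2 : ((m i : ℤ) : ℝ) ≤ ((⌈r⌉ : ℤ) : ℝ) := le_trans h1.2 (Int.le_ceil r)
      exact_mod_cast h2
  refine Set.Finite.subset (Set.Finite.image _ ?_) hsub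
  exact (Set.Finite.pi fun _ : Fin 2 => Set.finite_Icc (-⌈r⌉) ⌈r⌉).subset
    (fun m hm => Set.mem_univ_pi.mpr fun i => hm i)

lemma E_box_finite (hEeq : E = F₀ + lattice) (hF₀ : F₀.Finite)
    {B₀ : ℝ} (hB₀ : ∀ f ∈ F₀, ∀ i, |f i| ≤ B₀) (r : ℝ) :
    {v : V | v ∈ E ∧ ∀ i, |v i| ≤ r}.Finite := by
  have hsub : {v : V | v ∈ E ∧ ∀ i, |v i| ≤ r} ⊆
      F₀ + {v : V | v ∈ lattice ∧ ∀ i, |v i| ≤ r + B₀} := by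
    rintro v ⟨hvE, hb⟩
    rw [hEeq] at hvE
    obtain ⟨f, hf, m, hm, hsum⟩ := Set.mem_add.mp hvE
    refine Set.mem_add.mpr ⟨f, hf, m, ⟨hm, fun i => ?_⟩, hsum⟩
    have h1 : f i + m i = v i := congrFun hsum i
    have h2 := abs_le.mp (hb i)
    have h3 := abs_le.mp (hB₀ f hf i)
    rw [abs_le]
    constructor <;> linarith
  exact (Set.Finite.add hF₀ (lattice_box_finite _)).subset hsub

lemma Rect.ext' {R₁ R₂ : Rect} (hp : R₁.p = R₂.p) (hs : R₁.s = R₂.s)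
    (hu : R₁.u = R₂.u) : R₁ = R₂ := by
  cases R₁; cases R₂; simp_all

end Geom

/-- for a finite `f_A`-invariant set `ℰ`, there are finitely many
orbits of primitive `ℰ`-rectangles under the group `G`. -/
theorem statement_2 (A : Matrix (Fin 2) (Fin 2) ℤ) (hdet : A.det = 1) (htr : 2 < A.trace)
    (lam : ℝ) (hlam : 1 < lam) (vs vu : V) (hvs : vs ≠ 0) (hvu : vu ≠ 0)
    (hAs : actR A vs = lam⁻¹ • vs) (hAu : actR A vu = lam • vu)
    (E : Set V) (hEfin : IsTorusFinite E) (hEinv : IsInvariant A E) :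
    ∃ F : Set Rect, F.Finite ∧
      ∀ R : Rect, (R.IsPrimPos vs vu E ∨ R.IsPrimNeg vs vu E) →
        ∃ R₀ ∈ F, ∃ g : V → V, GElem A g ∧
          R.carrier vs vu = g '' (R₀.carrier vs vu) := by
  classical
  obtain ⟨F₀, hF₀fin, hEeq⟩ := hEfin
  have hlam0 : (0:ℝ) < lam := lt_trans one_pos hlam
  have hlamne : lam ≠ 0 := ne_of_gt hlam0
  rcases Set.eq_empty_or_nonempty E with hEemp | ⟨q, hq⟩
  · refine ⟨∅, Set.finite_empty, fun R hR => ?_⟩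
    exfalso
    rcases hR with h | h
    · rw [hEemp] at h; exact h.1.1
    · rw [hEemp] at h; exact h.1.1
  -- linear independence of the eigenvectors
  have hli : LinearIndependent ℝ ![vs, vu] := by
    rw [linearIndependent_fin2]
    constructor
    · simpa using hvu
    intro a ha
    simp only [Matrix.cons_val_zero, Matrix.cons_val_one, Matrix.head_cons] at ha
    refine hvs ?_
    have h1 : actR A (a • vu) = actR A vs := by rw [ha]
    rw [show actR A (a • vu) = a • actR A vu from Matrix.mulVec_smul _ _ _,
      hAu, hAs, ← ha] at h1
    have h2 : (a * lam) • vu = (lam⁻¹ * a) • vu := by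
      rw [← smul_smul, ← smul_smul]; exact h1
    have h3 : (a * lam - lam⁻¹ * a) • vu = 0 := by
      rw [sub_smul, h2, sub_self]
    rcases smul_eq_zero.mp h3 with h4 | h4
    · have h6 : a * (lam * lam - 1) = 0 := by
        have h7 := congrArg (fun x : ℝ => x * lam) h4
        simp only [sub_mul, zero_mul] at h7
        have h8 : lam⁻¹ * a * lam = a := by
          rw [mul_comm lam⁻¹ a, mul_assoc, inv_mul_cancel₀ hlamne, mul_one]
        rw [h8] at h7
        nlinarith [h7]
      rcases mul_eq_zero.mp h6 with h8 | h8
      · rw [← ha, h8, zero_smul]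
      · exfalso; nlinarith
    · exact absurd h4 hvu
  -- basis and coordinate functionals
  have card_eq : Fintype.card (Fin 2) = Module.finrank ℝ V := by
    simp [Module.finrank_fin_fun]
  let bB : Module.Basis (Fin 2) ℝ V := basisOfLinearIndependentOfCardEqFinrank hli card_eq
  have hbB : ⇑bB = ![vs, vu] := coe_basisOfLinearIndependentOfCardEqFinrank hli card_eq
  have hb0 : bB 0 = vs := by rw [hbB]; rfl
  have hb1 : bB 1 = vu := by rw [hbB]; rfl
  set φv : V →ₗ[ℝ] ℝ := bB.coord 0 with hφdef
  set ψv : V →ₗ[ℝ] ℝ := bB.coord 1 with hψdef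
  have hφs : φv vs = 1 := by
    rw [hφdef, ← hb0]; simp [Module.Basis.coord_apply]
  have hφu : φv vu = 0 := by
    rw [hφdef, ← hb1]; simp [Module.Basis.coord_apply, Module.Basis.repr_self]
  have hψs : ψv vs = 0 := by
    rw [hψdef, ← hb0]; simp [Module.Basis.coord_apply, Module.Basis.repr_self]
  have hψu : ψv vu = 1 := by
    rw [hψdef, ← hb1]; simp [Module.Basis.coord_apply]
  have hrepr : ∀ v : V, v = φv v • vs + ψv v • vu := by
    intro v
    have h := bB.sum_repr v
    rw [Fin.sum_univ_two, hb0, hb1] at h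
    rw [hφdef, hψdef]
    simp only [Module.Basis.coord_apply]
    exact h.symm
  -- the constant C bounding coordinates of small vectors
  set ee0 : V := Pi.single 0 1 with he0
  set ee1 : V := Pi.single 1 1 with he1
  have hdecomp : ∀ w : V, w = w 0 • ee0 + w 1 • ee1 := by
    intro w; funext i
    fin_cases i <;> simp [he0, he1]
  set C : ℝ := |φv ee0| + |φv ee1| + |ψv ee0| + |ψv ee1| with hCdef
  have hC0 : 0 ≤ C := by rw [hCdef]; positivity
  have hCb : ∀ w : V, (∀ i, |w i| ≤ (2:ℝ)⁻¹) → |φv w| ≤ C ∧ |ψv w| ≤ C := by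
    intro w hw
    have h0 := hw 0
    have h1 := hw 1
    have key : ∀ L : V →ₗ[ℝ] ℝ, |L w| ≤ |w 0| * |L ee0| + |w 1| * |L ee1| := by
      intro L
      conv_lhs => rw [hdecomp w]
      rw [map_add, _root_.map_smul, _root_.map_smul, smul_eq_mul, smul_eq_mul]
      calc |w 0 * L ee0 + w 1 * L ee1| ≤ |w 0 * L ee0| + |w 1 * L ee1| := abs_add_le _ _
        _ = |w 0| * |L ee0| + |w 1| * |L ee1| := by rw [abs_mul, abs_mul]
    have a0 := abs_nonneg (φv ee0); have a1 := abs_nonneg (φv ee1)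
    have b0 := abs_nonneg (ψv ee0); have b1 := abs_nonneg (ψv ee1)
    constructor
    · have kφ := key φv
      have m0 := mul_le_mul_of_nonneg_right h0 a0
      have m1 := mul_le_mul_of_nonneg_right h1 a1
      rw [hCdef]; linarith
    · have kψ := key ψv
      have m0 := mul_le_mul_of_nonneg_right h0 b0
      have m1 := mul_le_mul_of_nonneg_right h1 b1
      rw [hCdef]; linarith
  have hEl : ∀ e ∈ E, ∀ m ∈ lattice, e + m ∈ E :=
    fun e he m hm => E_add_lattice hEeq he hm
  set U : ℝ := lam * (2 * C + 1) ^ 2 with hUdef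
  have hU0 : 0 ≤ U := by rw [hUdef]; positivity
  have hub : ∀ {R : Rect}, (R.IsPrimPos vs vu E ∨ R.IsPrimNeg vs vu E) →
      1 ≤ R.s → R.u ≤ U := by
    intro R hR hs1
    rw [hUdef]
    exact u_bound hdet hlam hAs hAu hEinv hEeq hrepr hφs hφu hψs hψu hC0 hCb hq hR hs1
  -- a bound on the fundamental set F₀
  obtain ⟨B₁, hB₁⟩ := (hF₀fin.image (fun f : V => |f 0| + |f 1|)).bddAbove
  set B₀ : ℝ := max B₁ 0 with hB₀def
  have hB₀ : ∀ f ∈ F₀, ∀ i : Fin 2, |f i| ≤ B₀ := by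
    intro f hf i
    have hx : |f 0| + |f 1| ≤ B₁ := hB₁ (Set.mem_image_of_mem _ hf)
    have h0 := abs_nonneg (f 0); have h1 := abs_nonneg (f 1)
    have hBB : B₁ ≤ B₀ := le_max_left _ _
    fin_cases i
    · show |f 0| ≤ B₀; linarith
    · show |f 1| ≤ B₀; linarith
  set Cv : ℝ := |vs 0| + |vs 1| + |vu 0| + |vu 1| with hCvdef
  have hCv0 : 0 ≤ Cv := by rw [hCvdef]; positivity
  have hvsb : ∀ i : Fin 2, |vs i| ≤ Cv ∧ |vu i| ≤ Cv := by
    intro i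
    have a0 := abs_nonneg (vs 0); have a1 := abs_nonneg (vs 1)
    have b0 := abs_nonneg (vu 0); have b1 := abs_nonneg (vu 1)
    fin_cases i
    · constructor
      · show |vs 0| ≤ Cv; rw [hCvdef]; linarith
      · show |vu 0| ≤ Cv; rw [hCvdef]; linarith
    · constructor
      · show |vs 1| ≤ Cv; rw [hCvdef]; linarith
      · show |vu 1| ≤ Cv; rw [hCvdef]; linarith
  set RK : ℝ := B₀ + lam * Cv + U * Cv with hRKdef
  have hboxpt : ∀ fv : V, (∀ i, |fv i| ≤ B₀) → ∀ x y : ℝ, |x| ≤ lam → |y| ≤ U →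
      ∀ i, |(fv + x • vs + y • vu) i| ≤ RK := by
    intro fv hfv x y hx hy i
    have h1 : (fv + x • vs + y • vu) i = fv i + x * vs i + y * vu i := by simp
    rw [h1, hRKdef]
    have h2 := hfv i
    have h3 := (hvsb i).1
    have h4 := (hvsb i).2
    have h5 : |x * vs i| ≤ lam * Cv := by
      rw [abs_mul]; exact mul_le_mul hx h3 (abs_nonneg _) hlam0.le
    have h6 : |y * vu i| ≤ U * Cv := by
      rw [abs_mul]; exact mul_le_mul hy h4 (abs_nonneg _) hU0
    calc |fv i + x * vs i + y * vu i| ≤ |fv i + x * vs i| + |y * vu i| := abs_add_le _ _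
      _ ≤ |fv i| + |x * vs i| + |y * vu i| := by linarith [abs_add_le (fv i) (x * vs i)]
      _ ≤ B₀ + lam * Cv + U * Cv := by linarith
  have hEbox : {v : V | v ∈ E ∧ ∀ i, |v i| ≤ RK}.Finite :=
    E_box_finite hEeq hF₀fin hB₀ RK
  -- uniqueness of coordinates
  have hcoords : ∀ a b a' b' : ℝ, a • vs + b • vu = a' • vs + b' • vu → a = a' ∧ b = b' := by
    intro a b a' b' hh
    have hφh := congrArg φv hh
    have hψh := congrArg ψv hh
    rw [map_add, map_add, _root_.map_smul, _root_.map_smul, _root_.map_smul,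
      _root_.map_smul, hφs, hφu] at hφh
    rw [map_add, map_add, _root_.map_smul, _root_.map_smul, _root_.map_smul,
      _root_.map_smul, hψs, hψu] at hψh
    simp only [smul_eq_mul, mul_one, mul_zero, add_zero, zero_add] at hφh hψh
    exact ⟨hφh, hψh⟩
  -- the finite families
  set Fpos : Set Rect :=
    {R : Rect | R.IsPrimPos vs vu E ∧ R.p ∈ F₀ ∧ R.s ≤ lam ∧ R.u ≤ U} with hFposdef
  set Fneg : Set Rect :=
    {R : Rect | R.IsPrimNeg vs vu E ∧ R.decOrigin vs ∈ F₀ ∧ R.s ≤ lam ∧ R.u ≤ U} with hFnegdef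
  have hFposfin : Fpos.Finite := by
    have himg : (fun R : Rect => (R.p, R.incEnd vs vu)) '' Fpos ⊆
        F₀ ×ˢ {v : V | v ∈ E ∧ ∀ i, |v i| ≤ RK} := by
      rintro _ ⟨R, ⟨hprim, hpF, hsl, huU⟩, rfl⟩
      refine ⟨hpF, hprim.1.2, fun i => ?_⟩
      show |(R.incEnd vs vu) i| ≤ RK
      have hend : R.incEnd vs vu = R.p + R.s • vs + R.u • vu := rfl
      rw [hend]
      exact hboxpt R.p (hB₀ _ hpF) R.s R.u
        (by rw [abs_of_pos R.s_pos]; exact hsl)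
        (by rw [abs_of_pos R.u_pos]; exact huU) i
    have hinj : Set.InjOn (fun R : Rect => (R.p, R.incEnd vs vu)) Fpos := by
      intro R₁ _ R₂ _ hpair
      simp only [Prod.mk.injEq] at hpair
      obtain ⟨hp, hinc⟩ := hpair
      have hX : R₁.s • vs + R₁.u • vu = R₂.s • vs + R₂.u • vu := by
        have h := hinc
        simp only [Rect.incEnd] at h
        rw [hp] at h
        have h2 : R₂.p + (R₁.s • vs + R₁.u • vu) = R₂.p + (R₂.s • vs + R₂.u • vu) := by
          rw [← add_assoc, ← add_assoc]; exact h
        exact add_left_cancel h2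
      obtain ⟨hseq, hueq⟩ := hcoords _ _ _ _ hX
      exact Rect.ext' hp hseq hueq
    exact Set.Finite.of_finite_image ((hF₀fin.prod hEbox).subset himg) hinj
  have hFnegfin : Fneg.Finite := by
    have himg : (fun R : Rect => (R.decOrigin vs, R.decEnd vu)) '' Fneg ⊆
        F₀ ×ˢ {v : V | v ∈ E ∧ ∀ i, |v i| ≤ RK} := by
      rintro _ ⟨R, ⟨hprim, hpF, hsl, huU⟩, rfl⟩
      refine ⟨hpF, hprim.1.2, fun i => ?_⟩
      show |(R.decEnd vu) i| ≤ RK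
      have hend : R.decEnd vu = R.decOrigin vs + (-R.s) • vs + R.u • vu := by
        simp only [Rect.decEnd, Rect.decOrigin]
        module
      rw [hend]
      exact hboxpt _ (hB₀ _ hpF) _ _
        (by rw [abs_neg, abs_of_pos R.s_pos]; exact hsl)
        (by rw [abs_of_pos R.u_pos]; exact huU) i
    have hinj : Set.InjOn (fun R : Rect => (R.decOrigin vs, R.decEnd vu)) Fneg := by
      intro R₁ _ R₂ _ hpair
      simp only [Prod.mk.injEq] at hpair
      obtain ⟨hd, he⟩ := hpair
      have hX : R₁.s • vs + (-R₁.u) • vu = R₂.s • vs + (-R₂.u) • vu := by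
        have h1 : R₁.decOrigin vs - R₁.decEnd vu = R₁.s • vs + (-R₁.u) • vu := by
          simp only [Rect.decOrigin, Rect.decEnd]; module
        have h2 : R₂.decOrigin vs - R₂.decEnd vu = R₂.s • vs + (-R₂.u) • vu := by
          simp only [Rect.decOrigin, Rect.decEnd]; module
        rw [← h1, ← h2, hd, he]
      obtain ⟨hseq, hueq'⟩ := hcoords _ _ _ _ hX
      have hueq : R₁.u = R₂.u := by linarith
      have hpeq : R₁.p = R₂.p := by
        have h1 : R₁.p = R₁.decOrigin vs - R₁.s • vs := by
          simp only [Rect.decOrigin]; module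
        have h2 : R₂.p = R₂.decOrigin vs - R₂.s • vs := by
          simp only [Rect.decOrigin]; module
        rw [h1, h2, hd, hseq]
      exact Rect.ext' hpeq hseq hueq
    exact Set.Finite.of_finite_image ((hF₀fin.prod hEbox).subset himg) hinj
  refine ⟨Fpos ∪ Fneg, hFposfin.union hFnegfin, ?_⟩
  intro R hR
  -- normalisation of the stable side length
  set k : ℤ := ⌊Real.logb lam R.s⌋ with hkdef
  have hk1 : lam ^ k ≤ R.s := by
    have h1 : ((k : ℝ)) ≤ Real.logb lam R.s := Int.floor_le _
    have h2 := (Real.rpow_le_rpow_left_iff hlam).mpr h1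
    rwa [Real.rpow_logb hlam0 (ne_of_gt hlam) R.s_pos, Real.rpow_intCast] at h2
  have hk2 : R.s < lam ^ (k + 1) := by
    have h1 : Real.logb lam R.s < ((k : ℝ) + 1) := Int.lt_floor_add_one _
    have h2 := (Real.rpow_lt_rpow_left_iff hlam).mpr h1
    rw [Real.rpow_logb hlam0 (ne_of_gt hlam) R.s_pos] at h2
    have h3 : ((k : ℝ) + 1) = ((k + 1 : ℤ) : ℝ) := by push_cast; ring
    rwa [h3, Real.rpow_intCast] at h2
  have hznk : (0:ℝ) < lam ^ (-k) := zpow_pos hlam0 _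
  have hs1' : 1 ≤ lam ^ (-k) * R.s := by
    have h := mul_le_mul_of_nonneg_left hk1 hznk.le
    calc (1:ℝ) = lam ^ (-k) * lam ^ k := by rw [← zpow_add₀ hlamne]; simp
      _ ≤ lam ^ (-k) * R.s := h
  have hslam' : lam ^ (-k) * R.s ≤ lam := by
    have h := mul_le_mul_of_nonneg_left hk2.le hznk.le
    calc lam ^ (-k) * R.s ≤ lam ^ (-k) * lam ^ (k + 1) := h
      _ = lam := by rw [← zpow_add₀ hlamne, show -k + (k + 1) = 1 by ring, zpow_one]
  rcases hR with hpos | hneg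
  · -- positive primitive rectangle
    have hbase : actRZ A k R.p ∈ E := by
      have h := Set.mem_image_of_mem (actRZ A k) hpos.1.1
      rwa [actRZ_image_E hdet hEinv k] at h
    rw [hEeq] at hbase
    obtain ⟨f, hf, m, hm, hsum⟩ := Set.mem_add.mp hbase
    have hz : -m ∈ lattice := lattice_neg hm
    set R₀ : Rect := transport A hlam0 k (-m) R with hR₀def
    have hR₀prim : R₀.IsPrimPos vs vu E :=
      transport_prim_pos hdet hlam0 hAs hAu hEinv hEeq k hz hpos
    have hR₀p : R₀.p = f := by
      rw [hR₀def, transport_p, ← hsum]; abel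
    have hR₀s : R₀.s = lam ^ (-k) * R.s := rfl
    have hR₀u : R₀.u ≤ U := hub (Or.inl hR₀prim) (by rw [hR₀s]; exact hs1')
    refine ⟨R₀, Or.inl ⟨hR₀prim, hR₀p ▸ hf, by rw [hR₀s]; exact hslam', hR₀u⟩,
      fun v => actRZ A (-k) v + actRZ A (-k) (-(-m)),
      ⟨-k, actRZ A (-k) (-(-m)), actRZ_lattice hdet _ (lattice_neg hz), fun v => rfl⟩, ?_⟩
    rw [hR₀def, transport_carrier hdet hlam0 hAs hAu, ginv_image hdet]
  · -- negative primitive rectangle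
    have hbase : actRZ A k (R.decOrigin vs) ∈ E := by
      have h := Set.mem_image_of_mem (actRZ A k) hneg.1.1
      rwa [actRZ_image_E hdet hEinv k] at h
    rw [hEeq] at hbase
    obtain ⟨f, hf, m, hm, hsum⟩ := Set.mem_add.mp hbase
    have hz : -m ∈ lattice := lattice_neg hm
    set R₀ : Rect := transport A hlam0 k (-m) R with hR₀def
    have hR₀prim : R₀.IsPrimNeg vs vu E :=
      transport_prim_neg hdet hlam0 hAs hAu hEinv hEeq k hz hneg
    have hR₀p : R₀.decOrigin vs = f := by
      rw [hR₀def, transport_decOrigin hdet hlam0 hAs, ← hsum]; abel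
    have hR₀s : R₀.s = lam ^ (-k) * R.s := rfl
    have hR₀u : R₀.u ≤ U := hub (Or.inr hR₀prim) (by rw [hR₀s]; exact hs1')
    refine ⟨R₀, Or.inr ⟨hR₀prim, hR₀p ▸ hf, by rw [hR₀s]; exact hslam', hR₀u⟩,
      fun v => actRZ A (-k) v + actRZ A (-k) (-(-m)),
      ⟨-k, actRZ A (-k) (-(-m)), actRZ_lattice hdet _ (lattice_neg hz), fun v => rfl⟩, ?_⟩
    rw [hR₀def, transport_carrier hdet hlam0 hAs hAu, ginv_image hdet]

end Paper
end

section
/- Let A be a 2×2 integer matrix with determinant 1 and trace > 2, and let 𝒳 ⊆ 𝕋² be a nonempty finite f_A-invariant set. Then there exists ε > 0 such that for every finite f_A-invariant set 𝒴 ⊆ 𝕋² that is ε-dense, every positive 𝒳-rectangle and every negative 𝒳-rectangle contains a point of the lift 𝒴̃. -/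
/- Common setup: following the paper, we identify each subset of the torus
`𝕋² = ℝ²/ℤ²` with its (`ℤ²`-saturated) lift to `ℝ²`. -/

open Matrix Set
open scoped Pointwise

namespace Paper

/-! ### basic lemmas -/

lemma mem_lattice_iff {w : V} :
    w ∈ lattice ↔ (∃ a : ℤ, w 0 = a) ∧ (∃ b : ℤ, w 1 = b) := by
  constructor
  · rintro ⟨m, rfl⟩; exact ⟨⟨m 0, rfl⟩, ⟨m 1, rfl⟩⟩
  · rintro ⟨⟨a, ha⟩, ⟨b, hb⟩⟩
    exact ⟨![a, b], by
      funext i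
      fin_cases i <;> simp [ha, hb]⟩

lemma lattice_sub {w w' : V} (h : w ∈ lattice) (h' : w' ∈ lattice) :
    w - w' ∈ lattice := by
  rw [mem_lattice_iff] at h h' ⊢
  obtain ⟨⟨a, ha⟩, ⟨b, hb⟩⟩ := h
  obtain ⟨⟨a', ha'⟩, ⟨b', hb'⟩⟩ := h'
  refine ⟨⟨a - a', ?_⟩, ⟨b - b', ?_⟩⟩ <;> push_cast <;>
    simp [Pi.sub_apply, ha, hb, ha', hb']

lemma abs_comp_le_euclNorm (v : V) (i : Fin 2) : |v i| ≤ euclNorm v := by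
  have h0 : (v i) ^ 2 ≤ (v 0) ^ 2 + (v 1) ^ 2 := by
    fin_cases i
    · show (v 0) ^ 2 ≤ _; nlinarith [sq_nonneg (v 1)]
    · show (v 1) ^ 2 ≤ _; nlinarith [sq_nonneg (v 0)]
  calc |v i| = Real.sqrt ((v i) ^ 2) := (Real.sqrt_sq_eq_abs _).symm
  _ ≤ euclNorm v := Real.sqrt_le_sqrt h0

lemma euclNorm_le_abs_add (v : V) : euclNorm v ≤ |v 0| + |v 1| := by
  have : (v 0) ^ 2 + (v 1) ^ 2 ≤ (|v 0| + |v 1|) ^ 2 := by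
    nlinarith [abs_nonneg (v 0), abs_nonneg (v 1), sq_abs (v 0), sq_abs (v 1)]
  calc euclNorm v ≤ Real.sqrt ((|v 0| + |v 1|) ^ 2) := Real.sqrt_le_sqrt this
  _ = |v 0| + |v 1| := by
      rw [Real.sqrt_sq (by positivity)]

lemma euclNorm_neg (v : V) : euclNorm (-v) = euclNorm v := by
  simp [euclNorm]

/-! ### distance to integers -/

noncomputable def distToInt (x : ℝ) : ℝ := |x - round x|

lemma distToInt_pos {x : ℝ} (h : ¬∃ k : ℤ, x = k) : 0 < distToInt x := by
  rcases eq_or_lt_of_le (abs_nonneg (x - round x)) with h0 | h0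
  · exact absurd ⟨round x, by have := abs_eq_zero.mp h0.symm; linarith⟩ h
  · exact h0

lemma distToInt_le {x : ℝ} (k : ℤ) : distToInt x ≤ |x + k| := by
  have := round_le x (-k)
  simpa [distToInt, sub_neg_eq_add] using this

noncomputable def gap (w : V) : ℝ := max (distToInt (w 0)) (distToInt (w 1))

lemma gap_pos {w : V} (h : w ∉ lattice) : 0 < gap w := by
  rw [mem_lattice_iff] at h
  push_neg at h
  by_cases h0 : ∃ a : ℤ, w 0 = a
  · exact lt_max_of_lt_right (distToInt_pos (by push_neg; exact h h0))
  · exact lt_max_of_lt_left (distToInt_pos h0)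

lemma gap_le {w m : V} (hm : m ∈ lattice) : gap w ≤ euclNorm (w + m) := by
  rw [mem_lattice_iff] at hm
  obtain ⟨⟨a, ha⟩, ⟨b, hb⟩⟩ := hm
  refine max_le ?_ ?_
  · calc distToInt (w 0) ≤ |w 0 + a| := distToInt_le a
    _ = |(w + m) 0| := by rw [Pi.add_apply, ha]
    _ ≤ _ := abs_comp_le_euclNorm _ 0
  · calc distToInt (w 1) ≤ |w 1 + b| := distToInt_le b
    _ = |(w + m) 1| := by rw [Pi.add_apply, hb]
    _ ≤ _ := abs_comp_le_euclNorm _ 1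

/-! ### coordinates in the eigenbasis -/

def Ddet (vs vu : V) : ℝ := vs 0 * vu 1 - vs 1 * vu 0

noncomputable def csC (vs vu : V) (v : V) : ℝ := (v 0 * vu 1 - v 1 * vu 0) / Ddet vs vu

noncomputable def cuC (vs vu : V) (v : V) : ℝ := (vs 0 * v 1 - vs 1 * v 0) / Ddet vs vu

lemma decomp {vs vu : V} (hD : Ddet vs vu ≠ 0) (v : V) :
    v = csC vs vu v • vs + cuC vs vu v • vu := by
  funext i
  fin_cases i
  · show v 0 = (csC vs vu v • vs + cuC vs vu v • vu) 0
    simp only [Pi.add_apply, Pi.smul_apply, smul_eq_mul, csC, cuC]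
    field_simp; unfold Ddet; ring
  · show v 1 = (csC vs vu v • vs + cuC vs vu v • vu) 1
    simp only [Pi.add_apply, Pi.smul_apply, smul_eq_mul, csC, cuC]
    field_simp; unfold Ddet; ring

lemma csC_combo {vs vu : V} (hD : Ddet vs vu ≠ 0) (a b : ℝ) :
    csC vs vu (a • vs + b • vu) = a := by
  simp only [csC, Pi.add_apply, Pi.smul_apply, smul_eq_mul]
  field_simp
  unfold Ddet; ring

lemma cuC_combo {vs vu : V} (hD : Ddet vs vu ≠ 0) (a b : ℝ) :
    cuC vs vu (a • vs + b • vu) = b := by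
  simp only [cuC, Pi.add_apply, Pi.smul_apply, smul_eq_mul]
  field_simp
  unfold Ddet; ring

lemma csC_sub (vs vu v w : V) : csC vs vu (v - w) = csC vs vu v - csC vs vu w := by
  simp only [csC, Pi.sub_apply]; ring

lemma cuC_sub (vs vu v w : V) : cuC vs vu (v - w) = cuC vs vu v - cuC vs vu w := by
  simp only [cuC, Pi.sub_apply]; ring

lemma euclNorm_combo_le {vs vu : V} (a b : ℝ) :
    euclNorm (a • vs + b • vu) ≤ |a| * (|vs 0| + |vs 1|) + |b| * (|vu 0| + |vu 1|) := by
  refine (euclNorm_le_abs_add _).trans ?_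
  simp only [Pi.add_apply, Pi.smul_apply, smul_eq_mul]
  have h0 : |a * vs 0 + b * vu 0| ≤ |a| * |vs 0| + |b| * |vu 0| := by
    refine (abs_add_le _ _).trans ?_; rw [abs_mul, abs_mul]
  have h1 : |a * vs 1 + b * vu 1| ≤ |a| * |vs 1| + |b| * |vu 1| := by
    refine (abs_add_le _ _).trans ?_; rw [abs_mul, abs_mul]
  linarith

/-! ### actR algebra -/

lemma map_cast_mul (M N : Matrix (Fin 2) (Fin 2) ℤ) :
    (M * N).map (Int.cast : ℤ → ℝ) = M.map Int.cast * N.map Int.cast := by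
  ext i j
  simp only [Matrix.map_apply, Matrix.mul_apply]
  push_cast
  rfl

lemma actR_mul (M N : Matrix (Fin 2) (Fin 2) ℤ) (v : V) :
    actR (M * N) v = actR M (actR N v) := by
  simp only [actR, map_cast_mul, Matrix.mulVec_mulVec]

lemma actR_one (v : V) : actR 1 v = v := by
  simp [actR]

lemma actR_smul (M : Matrix (Fin 2) (Fin 2) ℤ) (c : ℝ) (v : V) :
    actR M (c • v) = c • actR M v := by
  simp only [actR]
  rw [Matrix.mulVec_smul]

lemma actR_add (M : Matrix (Fin 2) (Fin 2) ℤ) (v w : V) :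
    actR M (v + w) = actR M v + actR M w := by
  simp only [actR]
  rw [Matrix.mulVec_add]

lemma actR_sub (M : Matrix (Fin 2) (Fin 2) ℤ) (v w : V) :
    actR M (v - w) = actR M v - actR M w := by
  simp only [actR]
  rw [Matrix.mulVec_sub]

lemma actR_cast (M : Matrix (Fin 2) (Fin 2) ℤ) (m : Fin 2 → ℤ) :
    actR M (fun i => (m i : ℝ)) = fun i => ((M.mulVec m) i : ℝ) := by
  funext i
  simp only [actR, Matrix.mulVec, dotProduct, Matrix.map_apply]
  push_cast
  rfl

lemma actR_lattice (M : Matrix (Fin 2) (Fin 2) ℤ) {v : V} (hv : v ∈ lattice) :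
    actR M v ∈ lattice := by
  obtain ⟨m, rfl⟩ := hv
  exact ⟨M.mulVec m, (actR_cast M m).symm⟩

/-! ### quadratic irrationality -/

lemma int_root {t : ℤ} {m : ℤ} (h : (m:ℝ)^2 - t*(m:ℝ) + 1 = 0) : m = 1 ∨ m = -1 := by
  have hz : m^2 - t*m + 1 = 0 := by
    have : ((m^2 - t*m + 1 : ℤ) : ℝ) = 0 := by push_cast; linarith
    exact_mod_cast this
  have hu : IsUnit m := IsUnit.of_mul_eq_one (t - m) (by linarith [hz, mul_sub m t m]; )
  exact Int.isUnit_iff.mp hu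

lemma quad_irrational {t : ℤ} {μ : ℝ} (hquad : μ^2 - t*μ + 1 = 0)
    {p q : ℤ} (hq : (q:ℝ) ≠ 0) (hμ : μ = (p:ℝ)/(q:ℝ)) : μ = 1 ∨ μ = -1 := by
  have hq0 : q ≠ 0 := fun h => hq (by rw [h]; norm_num)
  have hint : p^2 - t*p*q + q^2 = 0 := by
    have : ((p^2 - t*p*q + q^2 : ℤ) : ℝ) = 0 := by
      push_cast
      rw [hμ] at hquad
      field_simp at hquad
      have h2 : (q:ℝ) * ((p:ℝ)^2 - (t:ℝ)*(p:ℝ)*(q:ℝ) + (q:ℝ)^2) = 0 := by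
        linear_combination (q:ℝ) * hquad
      rcases mul_eq_zero.mp h2 with h | h
      · exact absurd h hq
      · linarith
    exact_mod_cast this
  set g : ℕ := Int.gcd p q with hg
  have hgpos : 0 < g := Int.gcd_pos_of_ne_zero_right p hq0
  obtain ⟨p', hp'⟩ : (g:ℤ) ∣ p := Int.gcd_dvd_left p q
  obtain ⟨q', hq'⟩ : (g:ℤ) ∣ q := Int.gcd_dvd_right p q
  have hgne : (g:ℤ) ≠ 0 := by exact_mod_cast hgpos.ne'
  have hq'0 : q' ≠ 0 := by rintro rfl; simp at hq'; exact hq0 hq'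
  have hcop : Int.gcd p' q' = 1 := by
    have h1 : p' = p / (g:ℤ) := by rw [hp', Int.mul_ediv_cancel_left _ hgne]
    have h2 : q' = q / (g:ℤ) := by rw [hq', Int.mul_ediv_cancel_left _ hgne]
    rw [h1, h2, hg]
    exact Int.gcd_div_gcd_div_gcd hgpos
  have heq' : p'^2 - t*p'*q' + q'^2 = 0 := by
    have : (g:ℤ)^2 * (p'^2 - t*p'*q' + q'^2) = 0 := by rw [hp', hq'] at hint; linarith [hint]; 
    have := mul_eq_zero.mp this
    rcases this with h | h
    · exact absurd (pow_eq_zero_iff (n := 2) (by norm_num) |>.mp h) hgne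
    · exact h
  have hco : IsCoprime q' p' := Int.isCoprime_iff_gcd_eq_one.mpr (by rwa [Int.gcd_comm])
  have hdvd : q' ∣ p' * p' := ⟨t * p' - q', by nlinarith [heq']⟩
  have hq'dvd : q' ∣ p' := hco.dvd_of_dvd_mul_left hdvd
  have hunit : IsUnit q' := hco.isUnit_of_dvd' dvd_rfl hq'dvd
  have hμ' : μ = (p' : ℝ) / (q' : ℝ) := by
    rw [hμ, hp', hq']
    push_cast
    rw [mul_div_mul_left _ _ (by exact_mod_cast hgne)]
  rcases Int.isUnit_iff.mp hunit with h1 | h1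
  · subst h1
    have : μ = (p' : ℝ) := by rw [hμ']; norm_num
    rw [this] at hquad ⊢
    exact_mod_cast int_root hquad
  · subst h1
    have : μ = ((-p' : ℤ) : ℝ) := by rw [hμ']; push_cast; ring
    rw [this] at hquad ⊢
    exact_mod_cast int_root hquad

/-! ### the eigenvalue satisfies an integer quadratic -/

lemma eigen_comp {A : Matrix (Fin 2) (Fin 2) ℤ} {c : ℝ} {v : V}
    (h : actR A v = c • v) (i : Fin 2) :
    (A i 0 : ℝ) * v 0 + (A i 1 : ℝ) * v 1 = c * v i := by
  have := congrFun h i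
  simpa [actR, Matrix.mulVec, dotProduct, Fin.sum_univ_two, Matrix.map_apply] using this

lemma comp_ne_of_ne_zero {v : V} (hv : v ≠ 0) (i : Fin 2) (h : v i = 0) :
    v (1 - i) ≠ 0 := by
  intro h'
  apply hv
  funext j
  fin_cases i <;> fin_cases j <;> simp_all

lemma lam_quad {A : Matrix (Fin 2) (Fin 2) ℤ} (hdet : A.det = 1)
    {lam : ℝ} (hlam : 1 < lam) {vu : V} (hvu : vu ≠ 0)
    (hAu : actR A vu = lam • vu) :
    lam^2 - (A.trace : ℝ) * lam + 1 = 0 := by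
  have h0 := eigen_comp hAu 0
  have h1 := eigen_comp hAu 1
  have hdet' : (A 0 0 : ℝ) * (A 1 1 : ℝ) - (A 0 1 : ℝ) * (A 1 0 : ℝ) = 1 := by
    have := hdet
    rw [Matrix.det_fin_two] at this
    exact_mod_cast congrArg (Int.cast : ℤ → ℝ) this
  have htrace : (A.trace : ℝ) = (A 0 0 : ℝ) + (A 1 1 : ℝ) := by
    rw [Matrix.trace_fin_two]; push_cast; ring
  rw [htrace]
  by_cases hv0 : vu 0 = 0
  · have hv1 : vu 1 ≠ 0 := comp_ne_of_ne_zero hvu 0 hv0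
    rw [hv0] at h0 h1
    have hb : A 0 1 = 0 := by
      have : (A 0 1 : ℝ) * vu 1 = 0 := by simpa [hv0] using h0
      exact_mod_cast (mul_eq_zero.mp this).resolve_right hv1
    have hlamd : lam = (A 1 1 : ℝ) := by
      have : (A 1 1 : ℝ) * vu 1 = lam * vu 1 := by simpa using h1
      exact (mul_right_cancel₀ hv1 this).symm
    have had : A 0 0 * A 1 1 = 1 := by
      rw [Matrix.det_fin_two, hb] at hdet; linarith
    have hu : IsUnit (A 1 1) := IsUnit.of_mul_eq_one _ (by rw [mul_comm]; exact had)
    rcases Int.isUnit_iff.mp hu with h | h <;> rw [h] at hlamd <;> norm_num at hlamd <;> linarith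
  · by_cases hv1 : vu 1 = 0
    · rw [hv1] at h0 h1
      have hc : A 1 0 = 0 := by
        have : (A 1 0 : ℝ) * vu 0 = 0 := by simpa [hv1] using h1
        exact_mod_cast (mul_eq_zero.mp this).resolve_right hv0
      have hlamd : lam = (A 0 0 : ℝ) := by
        have : (A 0 0 : ℝ) * vu 0 = lam * vu 0 := by simpa using h0
        exact (mul_right_cancel₀ hv0 this).symm
      have had : A 0 0 * A 1 1 = 1 := by
        rw [Matrix.det_fin_two, hc] at hdet; linarith
      have hu : IsUnit (A 0 0) := IsUnit.of_mul_eq_one _ had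
      rcases Int.isUnit_iff.mp hu with h | h <;> rw [h] at hlamd <;> norm_num at hlamd <;> linarith
    · have key : (lam^2 - ((A 0 0 : ℝ) + (A 1 1 : ℝ)) * lam + 1) * (vu 0 * vu 1) = 0 := by
        linear_combination ((A 1 1 : ℝ) * vu 1 - lam * vu 1) * h0 - ((A 0 1 : ℝ) * vu 1) * h1 - (vu 0 * vu 1) * hdet'
      rcases mul_eq_zero.mp key with h | h
      · exact h
      · exact absurd h (mul_ne_zero hv0 hv1)

lemma lam_inv_quad {A : Matrix (Fin 2) (Fin 2) ℤ} (hdet : A.det = 1)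
    {lam : ℝ} (hlam : 1 < lam) {vu : V} (hvu : vu ≠ 0)
    (hAu : actR A vu = lam • vu) :
    (lam⁻¹)^2 - (A.trace : ℝ) * lam⁻¹ + 1 = 0 := by
  have h := lam_quad hdet hlam hvu hAu
  have hl : lam ≠ 0 := by linarith
  field_simp
  linear_combination h

/-! ### nonzero lattice points have nonzero eigen-coordinates -/

lemma eigen_scalar_rational {A : Matrix (Fin 2) (Fin 2) ℤ} {c : ℝ} {m : Fin 2 → ℤ}
    (hm : ∃ i, m i ≠ 0) (h : actR A (fun i => (m i : ℝ)) = c • (fun i => (m i : ℝ))) :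
    ∃ p q : ℤ, (q : ℝ) ≠ 0 ∧ c = (p : ℝ) / (q : ℝ) := by
  obtain ⟨i, hi⟩ := hm
  have hq : ((m i : ℤ) : ℝ) ≠ 0 := by exact_mod_cast hi
  refine ⟨A.mulVec m i, m i, hq, ?_⟩
  have := congrFun h i
  rw [actR_cast] at this
  simp only [Pi.smul_apply, smul_eq_mul] at this
  field_simp
  linarith [this]

lemma lattice_coord_ne {A : Matrix (Fin 2) (Fin 2) ℤ} (hdet : A.det = 1)
    {lam : ℝ} (hlam : 1 < lam) {vs vu : V} (hvu : vu ≠ 0)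
    (hAs : actR A vs = lam⁻¹ • vs) (hAu : actR A vu = lam • vu)
    (hD : Ddet vs vu ≠ 0) {w : V} (hw : w ∈ lattice) (hw0 : w ≠ 0) :
    csC vs vu w ≠ 0 ∧ cuC vs vu w ≠ 0 := by
  obtain ⟨m, rfl⟩ := hw
  have hmne : ∃ i, m i ≠ 0 := by
    by_contra h
    push_neg at h
    exact hw0 (funext fun i => by simp [h i])
  have hquad := lam_quad hdet hlam hvu hAu
  have hquad' := lam_inv_quad hdet hlam hvu hAu
  constructor
  · intro hcs
    have hdec := decomp hD (fun i => (m i : ℝ))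
    rw [hcs, zero_smul, zero_add] at hdec
    have hact : actR A (fun i => (m i : ℝ)) = lam • (fun i => (m i : ℝ)) := by
      rw [hdec, actR_smul, hAu, smul_comm]
    obtain ⟨p, q, hq, hc⟩ := eigen_scalar_rational hmne hact
    rcases quad_irrational hquad hq hc with h | h <;> linarith
  · intro hcu
    have hdec := decomp hD (fun i => (m i : ℝ))
    rw [hcu, zero_smul, add_zero] at hdec
    have hact : actR A (fun i => (m i : ℝ)) = lam⁻¹ • (fun i => (m i : ℝ)) := by
      rw [hdec, actR_smul, hAs, smul_comm]
    obtain ⟨p, q, hq, hc⟩ := eigen_scalar_rational hmne hact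
    have hpos : 0 < lam⁻¹ := inv_pos.mpr (by linarith)
    have hlt : lam⁻¹ < 1 := by
      rw [inv_lt_one_iff₀]; right; exact hlam
    rcases quad_irrational hquad' hq hc with h | h <;> linarith

/-! ### the invariant quadratic form -/

def Bf (A : Matrix (Fin 2) (Fin 2) ℤ) (v : V) : ℝ :=
  (A 1 0 : ℝ) * (v 0)^2 + ((A 1 1 : ℝ) - (A 0 0 : ℝ)) * (v 0) * (v 1) - (A 0 1 : ℝ) * (v 1)^2

lemma Bf_eigen_zero {A : Matrix (Fin 2) (Fin 2) ℤ} {c : ℝ} {v : V}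
    (h : actR A v = c • v) : Bf A v = 0 := by
  have h0 := eigen_comp h 0
  have h1 := eigen_comp h 1
  unfold Bf
  linear_combination (v 0) * h1 - (v 1) * h0

lemma Bf_combo {A : Matrix (Fin 2) (Fin 2) ℤ} {vs vu : V}
    (hBs : Bf A vs = 0) (hBu : Bf A vu = 0) (a b : ℝ) :
    Bf A (a • vs + b • vu) = a * b * Bf A (vs + vu) := by
  unfold Bf at *
  simp only [Pi.add_apply, Pi.smul_apply, smul_eq_mul]
  linear_combination (a^2 - a*b) * hBs + (b^2 - a*b) * hBu

lemma Bf_coord {A : Matrix (Fin 2) (Fin 2) ℤ} {lam : ℝ} {vs vu : V}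
    (hAs : actR A vs = lam⁻¹ • vs) (hAu : actR A vu = lam • vu)
    (hD : Ddet vs vu ≠ 0) (v : V) :
    Bf A v = csC vs vu v * cuC vs vu v * Bf A (vs + vu) := by
  have hBs : Bf A vs = 0 := Bf_eigen_zero hAs
  have hBu : Bf A vu = 0 := Bf_eigen_zero hAu
  conv_lhs => rw [decomp hD v]
  exact Bf_combo hBs hBu _ _

lemma kap_ne_zero {A : Matrix (Fin 2) (Fin 2) ℤ} (hdet : A.det = 1) (htr : 2 < A.trace)
    {lam : ℝ} {vs vu : V}
    (hAs : actR A vs = lam⁻¹ • vs) (hAu : actR A vu = lam • vu)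
    (hD : Ddet vs vu ≠ 0) : Bf A (vs + vu) ≠ 0 := by
  intro hk
  have hall : ∀ v : V, Bf A v = 0 := fun v => by rw [Bf_coord hAs hAu hD, hk, mul_zero]
  have h1 : Bf A ![1, 0] = 0 := hall _
  have h2 : Bf A ![0, 1] = 0 := hall _
  have h3 : Bf A ![1, 1] = 0 := hall _
  unfold Bf at h1 h2 h3
  simp only [Matrix.cons_val_zero, Matrix.cons_val_one, Matrix.head_cons] at h1 h2 h3
  have hc : (A 1 0 : ℝ) = 0 := by linarith [h1]
  have hb : (A 0 1 : ℝ) = 0 := by linarith [h2]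
  have hda : (A 1 1 : ℝ) = (A 0 0 : ℝ) := by nlinarith [h3]
  have hcz : A 1 0 = 0 := by exact_mod_cast hc
  have hbz : A 0 1 = 0 := by exact_mod_cast hb
  have hdaz : A 1 1 = A 0 0 := by exact_mod_cast hda
  rw [Matrix.det_fin_two, hbz, hdaz] at hdet
  rw [Matrix.trace_fin_two, hdaz] at htr
  nlinarith [hdet, htr]

lemma lattice_Q_lower {A : Matrix (Fin 2) (Fin 2) ℤ} (hdet : A.det = 1) (htr : 2 < A.trace)
    {lam : ℝ} (hlam : 1 < lam) {vs vu : V} (hvu : vu ≠ 0)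
    (hAs : actR A vs = lam⁻¹ • vs) (hAu : actR A vu = lam • vu)
    (hD : Ddet vs vu ≠ 0) {w : V} (hw : w ∈ lattice) (hw0 : w ≠ 0) :
    |Bf A (vs + vu)|⁻¹ ≤ |csC vs vu w * cuC vs vu w| := by
  have hk := kap_ne_zero hdet htr hAs hAu hD
  obtain ⟨m, rfl⟩ := hw
  set w : V := fun i => (m i : ℝ) with hwdef
  have hBint : Bf A w = ((A 1 0 * (m 0)^2 + (A 1 1 - A 0 0) * (m 0) * (m 1) - A 0 1 * (m 1)^2 : ℤ) : ℝ) := by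
    unfold Bf; push_cast; ring
  have hBne : Bf A w ≠ 0 := by
    rw [Bf_coord hAs hAu hD]
    obtain ⟨h1, h2⟩ := lattice_coord_ne hdet hlam hvu hAs hAu hD ⟨m, rfl⟩ hw0
    exact mul_ne_zero (mul_ne_zero h1 h2) hk
  have hBge : 1 ≤ |Bf A w| := by
    rw [hBint] at hBne ⊢
    have : (A 1 0 * (m 0)^2 + (A 1 1 - A 0 0) * (m 0) * (m 1) - A 0 1 * (m 1)^2 : ℤ) ≠ 0 := by
      exact_mod_cast hBne
    have h1 : 1 ≤ |(A 1 0 * (m 0)^2 + (A 1 1 - A 0 0) * (m 0) * (m 1) - A 0 1 * (m 1)^2 : ℤ)| :=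
      Int.one_le_abs this
    calc (1:ℝ) = ((1:ℤ):ℝ) := by norm_num
    _ ≤ |((A 1 0 * (m 0)^2 + (A 1 1 - A 0 0) * (m 0) * (m 1) - A 0 1 * (m 1)^2 : ℤ) : ℝ)| := by
        rw [← Int.cast_abs]; exact_mod_cast h1
  have hform : |Bf A w| = |csC vs vu w * cuC vs vu w| * |Bf A (vs + vu)| := by
    rw [Bf_coord hAs hAu hD, abs_mul]
  rw [hform] at hBge
  rw [inv_le_iff_one_le_mul₀ (abs_pos.mpr hk)] at *
  linarith [hBge]

/-! ### integer powers of the action -/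

abbrev MU : Type := (Matrix (Fin 2) (Fin 2) ℤ)ˣ

def actU (U : MU) (n : ℤ) (v : V) : V := actR ((U^n : MU) : Matrix (Fin 2) (Fin 2) ℤ) v

lemma actU_add (U : MU) (m n : ℤ) (v : V) :
    actU U (m + n) v = actU U m (actU U n v) := by
  unfold actU
  rw [_root_.zpow_add, Units.val_mul, actR_mul]

lemma actU_zero (U : MU) (v : V) : actU U 0 v = v := by
  unfold actU; rw [zpow_zero, Units.val_one, actR_one]

lemma actU_one {U : MU} {A : Matrix (Fin 2) (Fin 2) ℤ} (hU : (U : Matrix (Fin 2) (Fin 2) ℤ) = A)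
    (v : V) : actU U 1 v = actR A v := by
  unfold actU; rw [zpow_one, hU]

lemma actU_cancel (U : MU) (n : ℤ) (v : V) : actU U (-n) (actU U n v) = v := by
  rw [← actU_add, neg_add_cancel, actU_zero]

lemma actU_smul (U : MU) (n : ℤ) (c : ℝ) (v : V) : actU U n (c • v) = c • actU U n v :=
  actR_smul _ c v

lemma actU_add_vec (U : MU) (n : ℤ) (v w : V) : actU U n (v + w) = actU U n v + actU U n w :=
  actR_add _ v w

lemma actU_sub_vec (U : MU) (n : ℤ) (v w : V) : actU U n (v - w) = actU U n v - actU U n w :=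
  actR_sub _ v w

lemma actU_lattice (U : MU) (n : ℤ) {v : V} (hv : v ∈ lattice) : actU U n v ∈ lattice :=
  actR_lattice _ hv

lemma actU_eigen {U : MU} {A : Matrix (Fin 2) (Fin 2) ℤ}
    (hU : (U : Matrix (Fin 2) (Fin 2) ℤ) = A) {lam : ℝ} (hlam : 0 < lam) {vu : V}
    (hAu : actR A vu = lam • vu) (n : ℤ) : actU U n vu = (lam ^ n) • vu := by
  have hl0 : lam ≠ 0 := hlam.ne'
  have hm1 : actU U (-1) vu = lam⁻¹ • vu := by
    have h := actU_cancel U 1 vu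
    rw [actU_one hU, hAu, actU_smul] at h
    have := congrArg (fun w => lam⁻¹ • w) h
    simp only [smul_smul, inv_mul_cancel₀ hl0, one_smul] at this
    exact this
  induction n using Int.induction_on with
  | zero => rw [actU_zero, zpow_zero, one_smul]
  | succ k ih =>
      rw [show ((k:ℤ) + 1) = 1 + (k:ℤ) by ring, actU_add, ih, actU_smul, actU_one hU, hAu,
        smul_smul, zpow_add₀ hl0, zpow_one]
      ring_nf
  | pred k ih =>
      rw [show (-(k:ℤ) - 1) = (-1) + (-(k:ℤ)) by ring, actU_add, ih, actU_smul, hm1,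
        smul_smul, zpow_add₀ hl0]
      norm_num
      ring_nf

lemma actU_invariant {U : MU} {A : Matrix (Fin 2) (Fin 2) ℤ}
    (hU : (U : Matrix (Fin 2) (Fin 2) ℤ) = A) {X : Set V} (hX : IsInvariant A X)
    (n : ℤ) {x : V} (hx : x ∈ X) : actU U n x ∈ X := by
  induction n using Int.induction_on generalizing x with
  | zero => rw [actU_zero]; exact hx
  | succ k ih =>
      rw [show ((k:ℤ) + 1) = (k:ℤ) + 1 by ring, actU_add]
      refine ih ?_
      rw [actU_one hU]
      rw [← hX]
      exact Set.mem_image_of_mem _ hx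
  | pred k ih =>
      rw [show (-(k:ℤ) - 1) = -(k:ℤ) + (-1) by ring, actU_add]
      refine ih ?_
      have : x ∈ actR A '' X := by rw [hX]; exact hx
      obtain ⟨y, hy, hxy⟩ := this
      have : actU U (-1) x = y := by
        rw [← hxy, ← actU_one hU, actU_cancel]
      rw [this]
      exact hy

/-! ### separation for finite torus sets -/

lemma lattice_add_s3 {w w' : V} (h : w ∈ lattice) (h' : w' ∈ lattice) :
    w + w' ∈ lattice := by
  rw [mem_lattice_iff] at h h' ⊢
  obtain ⟨⟨a, ha⟩, ⟨b, hb⟩⟩ := h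
  obtain ⟨⟨a', ha'⟩, ⟨b', hb'⟩⟩ := h'
  refine ⟨⟨a + a', ?_⟩, ⟨b + b', ?_⟩⟩ <;> push_cast <;>
    simp [Pi.add_apply, ha, hb, ha', hb']

lemma sep_of_torusFinite {X : Set V} (hXfin : IsTorusFinite X) :
    ∃ δ : ℝ, 0 < δ ∧ ∀ p ∈ X, ∀ q ∈ X, q - p ∉ lattice → δ ≤ euclNorm (q - p) := by
  classical
  obtain ⟨F, hF, rfl⟩ := hXfin
  set Fs := hF.toFinset with hFs
  set T : Finset ℝ := insert 1 ((Fs ×ˢ Fs).image fun pq =>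
    if pq.2 - pq.1 ∈ lattice then 1 else gap (pq.2 - pq.1)) with hT
  have hTne : T.Nonempty := ⟨1, Finset.mem_insert_self _ _⟩
  refine ⟨T.min' hTne, ?_, ?_⟩
  · rw [Finset.lt_min'_iff]
    intro r hr
    rw [hT, Finset.mem_insert] at hr
    rcases hr with rfl | hr
    · norm_num
    · obtain ⟨pq, _, rfl⟩ := Finset.mem_image.mp hr
      split_ifs with h
      · norm_num
      · exact gap_pos h
  · rintro p hp q hq hql
    rw [Set.mem_add] at hp hq
    obtain ⟨f1, hf1, m1, hm1, rfl⟩ := hp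
    obtain ⟨f2, hf2, m2, hm2, rfl⟩ := hq
    have hmm : m2 - m1 ∈ lattice := lattice_sub hm2 hm1
    have hdc : f2 + m2 - (f1 + m1) = (f2 - f1) + (m2 - m1) := by ring
    have hwl : f2 - f1 ∉ lattice := by
      intro h
      exact hql (by rw [hdc]; exact lattice_add_s3 h hmm)
    have hgap : gap (f2 - f1) ∈ T := by
      rw [hT, Finset.mem_insert]
      right
      refine Finset.mem_image.mpr ⟨(f1, f2), ?_, ?_⟩
      · rw [Finset.mem_product]
        exact ⟨hF.mem_toFinset.mpr hf1, hF.mem_toFinset.mpr hf2⟩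
      · simp only [if_neg hwl]
    calc T.min' hTne ≤ gap (f2 - f1) := Finset.min'_le _ _ hgap
    _ ≤ euclNorm ((f2 - f1) + (m2 - m1)) := gap_le hmm
    _ = euclNorm (f2 + m2 - (f1 + m1)) := by rw [hdc]

/-! ### balancing -/

lemma balance {lam : ℝ} (hlam : 1 < lam) {δ P Q : ℝ} (hP : 0 < P) (hQ : 0 < Q)
    (h : ∀ n : ℤ, δ ≤ lam ^ (-n) * P + lam ^ n * Q) :
    δ ≤ (1 + lam) * Real.sqrt (P * Q) := by
  set M := Real.sqrt (P * Q) with hM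
  have hMpos : 0 < M := Real.sqrt_pos.mpr (by positivity)
  have hM2 : M ^ 2 = P * Q := Real.sq_sqrt (by positivity)
  obtain ⟨n, h1, h2⟩ := exists_mem_Ico_zpow (x := M / Q) (y := lam) (by positivity) hlam
  have hpow : (0:ℝ) < lam ^ n := zpow_pos (by linarith) n
  have hpow1 : (0:ℝ) < lam ^ (n + 1) := zpow_pos (by linarith) _
  have hQn : lam ^ n * Q ≤ M := by
    rw [le_div_iff₀ hQ] at h1
    linarith
  have hPn : lam ^ (-n) * P ≤ lam * M := by
    rw [div_lt_iff₀ hQ] at h2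
    have hlt : M < lam ^ (n+1) * Q := h2
    have hinv : lam ^ (-n) = lam / lam ^ (n + 1) := by
      rw [zpow_add₀ (by linarith : lam ≠ 0) n 1, zpow_one]
      field_simp [zpow_ne_zero n (show lam ≠ 0 by linarith)]
      rw [← zpow_add₀ (by linarith : lam ≠ 0), neg_add_cancel, zpow_zero]
    rw [hinv, div_mul_eq_mul_div, div_le_iff₀ hpow1]
    have hPM : P < lam ^ (n+1) * M := by
      have h4 : P * Q < lam ^ (n+1) * M * Q := by nlinarith [hlt, hMpos, hM2]
      exact lt_of_mul_lt_mul_right h4 hQ.le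
    nlinarith [mul_lt_mul_of_pos_left hPM (show (0:ℝ) < lam by linarith)]
  calc δ ≤ lam ^ (-n) * P + lam ^ n * Q := h n
  _ ≤ lam * M + M := by linarith
  _ = (1 + lam) * M := by ring

/-! ### coordinate bounds and independence -/

lemma coord_bound {vs vu : V} (v : V) :
    |csC vs vu v| ≤ ((|vs 0| + |vs 1|) + (|vu 0| + |vu 1|)) / |Ddet vs vu| * euclNorm v ∧
    |cuC vs vu v| ≤ ((|vs 0| + |vs 1|) + (|vu 0| + |vu 1|)) / |Ddet vs vu| * euclNorm v := by
  have h0 := abs_comp_le_euclNorm v 0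
  have h1 := abs_comp_le_euclNorm v 1
  have he : 0 ≤ euclNorm v := (abs_nonneg _).trans h0
  rcases eq_or_ne (Ddet vs vu) 0 with hD | hD
  · simp only [csC, cuC, hD, div_zero, abs_zero]
    constructor <;> positivity
  constructor
  · rw [csC, abs_div, div_mul_eq_mul_div, div_le_div_iff₀ (abs_pos.mpr hD) (abs_pos.mpr hD)]
    have : |v 0 * vu 1 - v 1 * vu 0| ≤ euclNorm v * (|vu 0| + |vu 1|) := by
      calc |v 0 * vu 1 - v 1 * vu 0| ≤ |v 0 * vu 1| + |v 1 * vu 0| := abs_sub _ _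
      _ = |v 0| * |vu 1| + |v 1| * |vu 0| := by rw [abs_mul, abs_mul]
      _ ≤ euclNorm v * (|vu 0| + |vu 1|) := by nlinarith [abs_nonneg (vu 0), abs_nonneg (vu 1)]
    nlinarith [abs_nonneg (vs 0), abs_nonneg (vs 1), abs_pos.mpr hD, this,
      mul_nonneg he (add_nonneg (abs_nonneg (vs 0)) (abs_nonneg (vs 1))), abs_pos.mpr hD]
  · rw [cuC, abs_div, div_mul_eq_mul_div, div_le_div_iff₀ (abs_pos.mpr hD) (abs_pos.mpr hD)]
    have : |vs 0 * v 1 - vs 1 * v 0| ≤ euclNorm v * (|vs 0| + |vs 1|) := by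
      calc |vs 0 * v 1 - vs 1 * v 0| ≤ |vs 0 * v 1| + |vs 1 * v 0| := abs_sub _ _
      _ = |vs 0| * |v 1| + |vs 1| * |v 0| := by rw [abs_mul, abs_mul]
      _ ≤ euclNorm v * (|vs 0| + |vs 1|) := by nlinarith [abs_nonneg (vs 0), abs_nonneg (vs 1)]
    nlinarith [abs_nonneg (vu 0), abs_nonneg (vu 1), abs_pos.mpr hD, this,
      mul_nonneg he (add_nonneg (abs_nonneg (vu 0)) (abs_nonneg (vu 1))), abs_pos.mpr hD]

lemma absSum_pos {v : V} (hv : v ≠ 0) : 0 < |v 0| + |v 1| := by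
  rcases eq_or_ne (v 0) 0 with h0 | h0
  · have := comp_ne_of_ne_zero hv 0 h0
    have h1 : v 1 ≠ 0 := by simpa using this
    have := abs_pos.mpr h1
    have := abs_nonneg (v 0)
    linarith
  · have := abs_pos.mpr h0
    have := abs_nonneg (v 1)
    linarith

lemma Ddet_ne_zero {A : Matrix (Fin 2) (Fin 2) ℤ} {lam : ℝ} (hlam : 1 < lam)
    {vs vu : V} (hvs : vs ≠ 0) (hvu : vu ≠ 0)
    (hAs : actR A vs = lam⁻¹ • vs) (hAu : actR A vu = lam • vu) :
    Ddet vs vu ≠ 0 := by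
  intro hD
  have hdep : ∃ c : ℝ, vu = c • vs := by
    rcases eq_or_ne (vs 0) 0 with h0 | h0
    · have h1 : vs 1 ≠ 0 := by simpa using comp_ne_of_ne_zero hvs 0 h0
      refine ⟨vu 1 / vs 1, ?_⟩
      funext i
      fin_cases i
      · show vu 0 = vu 1 / vs 1 * vs 0
        rw [Ddet] at hD
        field_simp
        nlinarith [hD]
      · show vu 1 = vu 1 / vs 1 * vs 1
        field_simp
    · refine ⟨vu 0 / vs 0, ?_⟩
      funext i
      fin_cases i
      · show vu 0 = vu 0 / vs 0 * vs 0
        field_simp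
      · show vu 1 = vu 0 / vs 0 * vs 1
        rw [Ddet] at hD
        field_simp
        nlinarith [hD]
  obtain ⟨c, hc⟩ := hdep
  have h1 : actR A vu = (c * lam⁻¹) • vs := by
    rw [hc, actR_smul, hAs, smul_smul]
  have h2 : actR A vu = (c * lam) • vs := by
    rw [hAu, hc, smul_smul, mul_comm]
  have hcc : (c * lam⁻¹) • vs = (c * lam) • vs := by rw [← h1, h2]
  have hlam0 : lam ≠ 0 := by linarith
  have hc0 : c = 0 := by
    by_contra hc0
    have : (c * lam⁻¹ - c * lam) • vs = 0 := by
      rw [sub_smul, hcc, sub_self]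
    rcases smul_eq_zero.mp this with h | h
    · have hne : lam⁻¹ ≠ lam := by
        intro he
        have : lam * lam = 1 := by
          field_simp at he
          nlinarith [he]
        nlinarith
      apply hc0
      have : c * (lam⁻¹ - lam) = 0 := by linarith [h]; 
      rcases mul_eq_zero.mp this with h' | h'
      · exact h'
      · exact absurd (by linarith [h'] : lam⁻¹ = lam) hne
    · exact hvs h
  rw [hc0, zero_smul] at hc
  exact hvu hc

/-! ### lower bound on the diagonal coordinate product -/

lemma diag_lower {A : Matrix (Fin 2) (Fin 2) ℤ} (hdet : A.det = 1) (htr : 2 < A.trace)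
    {lam : ℝ} (hlam : 1 < lam) {vs vu : V} (hvs : vs ≠ 0) (hvu : vu ≠ 0)
    (hAs : actR A vs = lam⁻¹ • vs) (hAu : actR A vu = lam • vu)
    (hD : Ddet vs vu ≠ 0) {U : MU} (hU : (U : Matrix (Fin 2) (Fin 2) ℤ) = A)
    {X : Set V} (hXinv : IsInvariant A X)
    {δ : ℝ} (hδ : 0 < δ)
    (hsep : ∀ p ∈ X, ∀ q ∈ X, q - p ∉ lattice → δ ≤ euclNorm (q - p))
    {p q : V} (hp : p ∈ X) (hq : q ∈ X)
    (hcs : csC vs vu (q - p) ≠ 0) (hcu : cuC vs vu (q - p) ≠ 0) :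
    min (|Bf A (vs + vu)|⁻¹)
      (δ^2 / ((1 + lam)^2 * ((|vs 0| + |vs 1|) * (|vu 0| + |vu 1|)))) ≤
      |csC vs vu (q - p)| * |cuC vs vu (q - p)| := by
  set d := q - p with hd
  set Ns := |vs 0| + |vs 1| with hNs
  set Nu := |vu 0| + |vu 1| with hNu
  have hNs0 : 0 < Ns := absSum_pos hvs
  have hNu0 : 0 < Nu := absSum_pos hvu
  by_cases hlat : d ∈ lattice
  · have hd0 : d ≠ 0 := by
      intro h
      apply hcs
      rw [h]
      simp [csC]
    have := lattice_Q_lower hdet htr hlam hvu hAs hAu hD hlat hd0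
    rw [abs_mul] at this
    exact (min_le_left _ _).trans this
  · refine (min_le_right _ _).trans ?_
    have hbound : ∀ n : ℤ, δ ≤ lam ^ (-n) * (|csC vs vu d| * Ns) + lam ^ n * (|cuC vs vu d| * Nu) := by
      intro n
      have hpn : actU U n p ∈ X := actU_invariant hU hXinv n hp
      have hqn : actU U n q ∈ X := actU_invariant hU hXinv n hq
      have hdn : actU U n q - actU U n p = actU U n d := (actU_sub_vec U n q p).symm
      have hnl : actU U n q - actU U n p ∉ lattice := by
        rw [hdn]
        intro hmem
        apply hlat
        have := actU_lattice U (-n) hmem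
        rwa [actU_cancel] at this
      have h1 : δ ≤ euclNorm (actU U n d) := by
        rw [← hdn]
        exact hsep _ hpn _ hqn hnl
      have hds : actU U n d = (lam ^ (-n) * csC vs vu d) • vs + (lam ^ n * cuC vs vu d) • vu := by
        conv_lhs => rw [decomp hD d]
        rw [actU_add_vec, actU_smul, actU_smul,
          actU_eigen hU (by linarith : (0:ℝ) < lam) hAu n,
          actU_eigen hU (by positivity : (0:ℝ) < lam⁻¹) hAs n]
        rw [smul_smul, smul_smul]
        congr 1
        · rw [_root_.inv_zpow, ← _root_.zpow_neg]; ring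
        · congr 1; ring
      have h2 : euclNorm (actU U n d) ≤
          |lam ^ (-n) * csC vs vu d| * Ns + |lam ^ n * cuC vs vu d| * Nu := by
        rw [hds]; exact euclNorm_combo_le _ _
      have hpow : (0:ℝ) < lam ^ (-n) := zpow_pos (by linarith) _
      have hpow' : (0:ℝ) < lam ^ n := zpow_pos (by linarith) _
      rw [abs_mul, abs_mul, abs_of_pos hpow, abs_of_pos hpow'] at h2
      calc δ ≤ euclNorm (actU U n d) := h1
      _ ≤ _ := h2
      _ = lam ^ (-n) * (|csC vs vu d| * Ns) + lam ^ n * (|cuC vs vu d| * Nu) := by ring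
    have hP : 0 < |csC vs vu d| * Ns := mul_pos (abs_pos.mpr hcs) hNs0
    have hQ : 0 < |cuC vs vu d| * Nu := mul_pos (abs_pos.mpr hcu) hNu0
    have hb := balance hlam hP hQ hbound
    have hsq : δ^2 ≤ (1 + lam)^2 * ((|csC vs vu d| * Ns) * (|cuC vs vu d| * Nu)) := by
      have h1lam : 0 < 1 + lam := by linarith
      have hs := Real.sq_sqrt (le_of_lt (mul_pos hP hQ))
      nlinarith [hb, Real.sqrt_nonneg ((|csC vs vu d| * Ns) * (|cuC vs vu d| * Nu)), hδ]
    rw [div_le_iff₀ (by positivity)]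
    nlinarith [hsq]


/-- for a nonempty finite `f_A`-invariant set `𝒳` there is `ε > 0`
such that for every finite `f_A`-invariant `ε`-dense set `𝒴`, every positive and
every negative `𝒳`-rectangle contains a point of `𝒴̃`. -/
theorem statement_3 (A : Matrix (Fin 2) (Fin 2) ℤ) (hdet : A.det = 1) (htr : 2 < A.trace)
    (lam : ℝ) (hlam : 1 < lam) (vs vu : V) (hvs : vs ≠ 0) (hvu : vu ≠ 0)
    (hAs : actR A vs = lam⁻¹ • vs) (hAu : actR A vu = lam • vu)
    (X : Set V) (hXne : X.Nonempty) (hXfin : IsTorusFinite X) (hXinv : IsInvariant A X) :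
    ∃ ε : ℝ, 0 < ε ∧
      ∀ Y : Set V, IsTorusFinite Y → IsInvariant A Y → EDense ε Y →
        ∀ R : Rect, (R.IsPos vs vu X ∨ R.IsNeg vs vu X) →
          (R.carrier vs vu ∩ Y).Nonempty := by
  classical
  have hD : Ddet vs vu ≠ 0 := Ddet_ne_zero hlam hvs hvu hAs hAu
  obtain ⟨U, hU⟩ : IsUnit A :=
    (Matrix.isUnit_iff_isUnit_det A).mpr (by rw [hdet]; exact isUnit_one)
  obtain ⟨δ, hδ, hsep⟩ := sep_of_torusFinite hXfin
  have hlam0 : (0:ℝ) < lam := by linarith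
  set Ns := |vs 0| + |vs 1| with hNs
  set Nu := |vu 0| + |vu 1| with hNu
  have hNs0 : 0 < Ns := absSum_pos hvs
  have hNu0 : 0 < Nu := absSum_pos hvu
  have hkap : Bf A (vs + vu) ≠ 0 := kap_ne_zero hdet htr hAs hAu hD
  set c2 : ℝ := min (|Bf A (vs + vu)|⁻¹) (δ^2 / ((1 + lam)^2 * (Ns * Nu))) with hc2
  have hc2pos : 0 < c2 := by
    refine lt_min (inv_pos.mpr (abs_pos.mpr hkap)) ?_
    have : (0:ℝ) < (1 + lam)^2 * (Ns * Nu) := by positivity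
    positivity
  set r : ℝ := Real.sqrt c2 with hr
  have hrpos : 0 < r := Real.sqrt_pos.mpr hc2pos
  have hr2 : r^2 = c2 := Real.sq_sqrt hc2pos.le
  set K : ℝ := (Ns + Nu) / |Ddet vs vu| with hK
  have hKpos : 0 < K := div_pos (by linarith) (abs_pos.mpr hD)
  set L : ℝ := r / lam with hLdef
  have hLpos : 0 < L := div_pos hrpos hlam0
  have hLr : L ≤ r := by
    rw [hLdef, div_le_iff₀ hlam0]
    nlinarith
  refine ⟨L / (2 * K), by positivity, ?_⟩
  intro Y hYfin hYinv hYd R hR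
  -- Step 1: the coordinate-area of the rectangle is at least c2
  have hsu : c2 ≤ R.s * R.u := by
    rcases hR with h | h
    · have hdq : R.incEnd vs vu - R.p = R.s • vs + R.u • vu := by
        rw [Rect.incEnd]; abel
      have hcs : csC vs vu (R.incEnd vs vu - R.p) = R.s := by
        rw [hdq, csC_combo hD]
      have hcu : cuC vs vu (R.incEnd vs vu - R.p) = R.u := by
        rw [hdq, cuC_combo hD]
      have h1 := diag_lower hdet htr hlam hvs hvu hAs hAu hD hU hXinv hδ hsep h.1 h.2
        (by rw [hcs]; exact R.s_pos.ne') (by rw [hcu]; exact R.u_pos.ne')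
      rw [hcs, hcu, abs_of_pos R.s_pos, abs_of_pos R.u_pos] at h1
      exact h1
    · have hdq : R.decEnd vu - R.decOrigin vs = (-R.s) • vs + R.u • vu := by
        rw [Rect.decEnd, Rect.decOrigin, neg_smul]; abel
      have hcs : csC vs vu (R.decEnd vu - R.decOrigin vs) = -R.s := by
        rw [hdq, csC_combo hD]
      have hcu : cuC vs vu (R.decEnd vu - R.decOrigin vs) = R.u := by
        rw [hdq, cuC_combo hD]
      have h1 := diag_lower hdet htr hlam hvs hvu hAs hAu hD hU hXinv hδ hsep h.1 h.2
        (by rw [hcs]; exact neg_ne_zero.mpr R.s_pos.ne') (by rw [hcu]; exact R.u_pos.ne')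
      rw [hcs, hcu, abs_neg, abs_of_pos R.s_pos, abs_of_pos R.u_pos] at h1
      exact h1
  -- Step 2: renormalize the rectangle by a power of A
  obtain ⟨n, h1, h2⟩ := exists_mem_Ico_zpow (x := R.s / r) (y := lam)
    (div_pos R.s_pos hrpos) hlam
  set k : ℤ := n + 1 with hk
  have hlamne : lam ≠ 0 := hlam0.ne'
  have hcancel : lam ^ (-k) * lam ^ k = 1 := by
    rw [← zpow_add₀ hlamne, neg_add_cancel, zpow_zero]
  have hpk : (0:ℝ) < lam ^ k := zpow_pos hlam0 _
  have hpnk : (0:ℝ) < lam ^ (-k) := zpow_pos hlam0 _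
  set s' : ℝ := lam ^ (-k) * R.s with hs'
  set u' : ℝ := lam ^ k * R.u with hu'
  have hs'pos : 0 < s' := mul_pos hpnk R.s_pos
  have hu'pos : 0 < u' := mul_pos hpk R.u_pos
  have hs'u' : s' * u' = R.s * R.u := by
    rw [hs', hu']
    calc lam ^ (-k) * R.s * (lam ^ k * R.u) = (lam ^ (-k) * lam ^ k) * (R.s * R.u) := by ring
    _ = R.s * R.u := by rw [hcancel, one_mul]
  have hs'lt : s' < r := by
    rw [div_lt_iff₀ hrpos] at h2
    have h2' : R.s < r * lam ^ k := by rw [hk]; linarith [h2]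
    calc s' = lam ^ (-k) * R.s := hs'
    _ < lam ^ (-k) * (r * lam ^ k) := by
        exact mul_lt_mul_of_pos_left h2' hpnk
    _ = r * (lam ^ (-k) * lam ^ k) := by ring
    _ = r := by rw [hcancel, mul_one]
  have hs'ge : L ≤ s' := by
    rw [le_div_iff₀ hrpos] at h1
    have hns : lam ^ n = lam ^ k * lam⁻¹ := by
      rw [hk, zpow_add₀ hlamne, zpow_one]
      field_simp
    have h1' : lam ^ k * lam⁻¹ * r ≤ R.s := by rw [← hns]; exact h1
    have := mul_le_mul_of_nonneg_left h1' hpnk.le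
    calc L = r / lam := hLdef
    _ = lam ^ (-k) * (lam ^ k * lam⁻¹ * r) := by
        field_simp
        exact hcancel.symm
    _ ≤ lam ^ (-k) * R.s := this
  have hu'ge : r ≤ u' := by
    nlinarith [hs'u', hsu, hs'lt, hs'pos, hr2, hu'pos]
  -- Step 3: find a point of Y near the center of the renormalized rectangle
  set z : V := actU U k R.p + (s'/2) • vs + (u'/2) • vu with hz
  obtain ⟨y, hyY, hyd⟩ := hYd z
  set w : V := y - z with hw
  have hnw : euclNorm w ≤ L / (2 * K) := by
    have : w = -(z - y) := by rw [hw, neg_sub]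
    rw [this, euclNorm_neg]
    exact hyd
  have hcw := coord_bound (vs := vs) (vu := vu) w
  have hcsw : |csC vs vu w| ≤ L / 2 := by
    refine hcw.1.trans ?_
    calc K * euclNorm w ≤ K * (L / (2 * K)) :=
      mul_le_mul_of_nonneg_left hnw hKpos.le
    _ = L / 2 := by field_simp
  have hcuw : |cuC vs vu w| ≤ L / 2 := by
    refine hcw.2.trans ?_
    calc K * euclNorm w ≤ K * (L / (2 * K)) :=
      mul_le_mul_of_nonneg_left hnw hKpos.le
    _ = L / 2 := by field_simp
  set a' : ℝ := s'/2 + csC vs vu w with ha'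
  set b' : ℝ := u'/2 + cuC vs vu w with hb'
  have habs1 := abs_le.mp hcsw
  have habs2 := abs_le.mp hcuw
  have ha'0 : 0 ≤ a' := by rw [ha']; linarith [hs'ge, habs1.1]
  have ha's : a' ≤ s' := by rw [ha']; linarith [hs'ge, habs1.2]
  have hb'0 : 0 ≤ b' := by rw [hb']; linarith [hu'ge, hLr, habs2.1]
  have hb'u : b' ≤ u' := by rw [hb']; linarith [hu'ge, hLr, habs2.2]
  have hy : y = actU U k R.p + a' • vs + b' • vu := by
    have hwdec := decomp hD w
    have hyzw : y = z + w := by rw [hw]; abel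
    rw [hyzw, hz]
    conv_lhs => rw [hwdec]
    rw [ha', hb', add_smul, add_smul]
    abel
  -- Step 4: pull the point back to the original rectangle
  refine ⟨actU U (-k) y, ?_, actU_invariant hU hYinv _ hyY⟩
  have heigs : actU U (-k) vs = (lam ^ k) • vs := by
    rw [actU_eigen hU (by positivity : (0:ℝ) < lam⁻¹) hAs (-k), _root_.inv_zpow,
      ← _root_.zpow_neg, neg_neg]
  have heigu : actU U (-k) vu = (lam ^ (-k)) • vu := by
    rw [actU_eigen hU hlam0 hAu (-k)]
  have hval : actU U (-k) y = R.p + (a' * lam ^ k) • vs + (b' * lam ^ (-k)) • vu := by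
    rw [hy, actU_add_vec, actU_add_vec, actU_smul, actU_smul, actU_cancel, heigs, heigu,
      smul_smul, smul_smul]
  refine ⟨a' * lam ^ k, b' * lam ^ (-k), mul_nonneg ha'0 hpk.le, ?_,
    mul_nonneg hb'0 hpnk.le, ?_, hval⟩
  · calc a' * lam ^ k ≤ s' * lam ^ k := mul_le_mul_of_nonneg_right ha's hpk.le
    _ = R.s := by rw [hs']; linear_combination R.s * hcancel
  · calc b' * lam ^ (-k) ≤ u' * lam ^ (-k) := mul_le_mul_of_nonneg_right hb'u hpnk.le
    _ = R.u := by rw [hu']; linear_combination R.u * hcancel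


end Paper
end
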